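/- arXiv:2001.11922 — 5 statements merged into one kernel-verified Lean document; each statement's English description precedes it below -/
import Mathlib

section
/- Let A be an n×n complex matrix, v ∈ ℂ^n and p ≥ 1 a natural number. Then the function w_p(t) = t^p φ_p(tA) v satisfies w_p(0) = 0 and, for every t ∈ ℝ, w_p has derivative w_p'(t) = A w_p(t) + (t^{p−1}/(p−1)!) v. -/
open MeasureTheory

/-- `φ_p(M) = ∑_{k=0}^∞ M^k/(k+p)!` for a square complex matrix `M`;
`matPhi 0` is the matrix exponential. -/
noncomputable def matPhi {N : Type*} [Fintype N] [DecidableEq N] (p : ℕ) (M : Matrix N N ℂ) :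
    Matrix N N ℂ :=
  ∑' k : ℕ, ((k + p).factorial : ℂ)⁻¹ • M ^ k

/-- `φ_p(z) = ∑_{k=0}^∞ z^k/(k+p)!` for `z ∈ ℂ`. -/
noncomputable def phiC (p : ℕ) (z : ℂ) : ℂ :=
  ∑' k : ℕ, z ^ k / ((k + p).factorial : ℂ)

/-- The ordered simplex `{1 ≥ s 0 ≥ s 1 ≥ ⋯ ≥ s (k-1) ≥ 0}`, the domain of the
iterated integral `∫_0^1 ∫_0^{s_1} ⋯ ∫_0^{s_{k-2}} ⋯ ds_{k-1} ⋯ ds_1`. -/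
def simplexSet (k : ℕ) : Set (Fin k → ℝ) :=
  {s | (∀ j, 0 ≤ s j ∧ s j ≤ 1) ∧ ∀ i j : Fin k, i ≤ j → s j ≤ s i}

/-- Divided difference of `f` over the `k+1` nodes `x 0, …, x k`, via the
Hermite–Genocchi formula
`f[x_0,…,x_k] = ∫_{Δ_k} f^{(k)}(x_0 + ∑_j s_j (x_{j+1} − x_j)) ds`. -/
noncomputable def divDiff (f : ℂ → ℂ) {k : ℕ} (x : Fin (k + 1) → ℂ) : ℂ :=
  ∫ s in simplexSet k,
    iteratedDeriv k f (x 0 + ∑ j : Fin k, (s j : ℂ) * (x j.succ - x j.castSucc))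

/-- Euclidean norm `‖x‖₂` of a complex vector. -/
noncomputable def vnorm {N : Type*} [Fintype N] (x : N → ℂ) : ℝ :=
  Real.sqrt (∑ i, ‖x i‖ ^ 2)

/-- Spectral operator norm `‖A‖₂` (operator norm induced by the Euclidean norm). -/
noncomputable def mnorm {N M : Type*} [Fintype N] [Fintype M] (A : Matrix N M ℂ) : ℝ :=
  sSup {c : ℝ | ∃ x : M → ℂ, vnorm x ≤ 1 ∧ c = vnorm (A.mulVec x)}

/-- `A` is dissipative: `Re⟨A y, y⟩ ≤ 0` for all `y`. -/
def Dissipative {N : Type*} [Fintype N] (A : Matrix N N ℂ) : Prop :=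
  ∀ y : N → ℂ, (dotProduct (star y) (A.mulVec y)).re ≤ 0

namespace Statement0Aux

variable {n : ℕ}

lemma entry_bound (A : Matrix (Fin n) (Fin n) ℂ) :
    ∃ r : ℝ, 0 ≤ r ∧ ∀ (k : ℕ) (i j : Fin n), ‖(A ^ k) i j‖ ≤ r ^ k := by
  classical
  refine ⟨(∑ i, ∑ j, ‖A i j‖) + 1, by positivity, ?_⟩
  set r : ℝ := (∑ i, ∑ j, ‖A i j‖) + 1 with hrdef
  have hrow : ∀ i, (∑ j, ‖A i j‖) ≤ r := by
    intro i
    have h1 : (∑ j, ‖A i j‖) ≤ ∑ i, ∑ j, ‖A i j‖ :=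
      Finset.single_le_sum (f := fun i => ∑ j, ‖A i j‖)
        (fun i _ => by positivity) (Finset.mem_univ i)
    rw [hrdef]; linarith
  have hr0 : 0 ≤ r := by positivity
  intro k
  induction k with
  | zero =>
    intro i j
    simp only [pow_zero, Matrix.one_apply]
    split_ifs <;> simp
  | succ k ih =>
    intro i j
    have h0 : (A ^ (k+1)) i j = ∑ l, A i l * (A ^ k) l j := by
      rw [pow_succ', Matrix.mul_apply]
    rw [h0]
    calc ‖∑ l, A i l * (A ^ k) l j‖
        ≤ ∑ l, ‖A i l * (A ^ k) l j‖ := norm_sum_le _ _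
      _ = ∑ l, ‖A i l‖ * ‖(A ^ k) l j‖ := by simp [map_mul]
      _ ≤ ∑ l, ‖A i l‖ * r ^ k := by
          refine Finset.sum_le_sum fun l _ => ?_
          exact mul_le_mul_of_nonneg_left (ih l j) (norm_nonneg _)
      _ = (∑ l, ‖A i l‖) * r ^ k := by rw [Finset.sum_mul]
      _ ≤ r * r ^ k := mul_le_mul_of_nonneg_right (hrow i) (pow_nonneg hr0 k)
      _ = r ^ (k+1) := (pow_succ' r k).symm

lemma vec_bound (A : Matrix (Fin n) (Fin n) ℂ) (v : Fin n → ℂ) :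
    ∃ C r : ℝ, 0 ≤ C ∧ 0 ≤ r ∧ ∀ k : ℕ, ‖(A ^ k).mulVec v‖ ≤ C * r ^ k := by
  obtain ⟨r, hr, hA⟩ := entry_bound A
  refine ⟨∑ j, ‖v j‖, r, by positivity, hr, ?_⟩
  intro k
  rw [mul_comm]
  refine pi_norm_le_iff_of_nonneg (by positivity) |>.mpr fun i => ?_
  have h0 : (A ^ k).mulVec v i = ∑ j, (A ^ k) i j * v j := by
    simp [Matrix.mulVec, dotProduct]
  rw [h0]
  calc ‖∑ j, (A ^ k) i j * v j‖
      ≤ ∑ j, ‖(A ^ k) i j * v j‖ := norm_sum_le _ _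
    _ = ∑ j, ‖(A ^ k) i j‖ * ‖v j‖ := by simp [map_mul]
    _ ≤ ∑ j, r ^ k * ‖v j‖ := by
        refine Finset.sum_le_sum fun j _ => ?_
        exact mul_le_mul_of_nonneg_right (hA k i j) (norm_nonneg _)
    _ = r ^ k * ∑ j, ‖v j‖ := by rw [Finset.mul_sum]

lemma norm_term_le {C r : ℝ} (hC : 0 ≤ C) (hr : 0 ≤ r) {x : Fin n → ℂ} {k m : ℕ}
    (hx : ‖x‖ ≤ C * r ^ k) {s R : ℝ} (hs : |s| ≤ R) :
    ‖((s:ℂ) ^ (k+m) / (((k+m).factorial : ℕ) : ℂ)) • x‖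
      ≤ (C * R ^ m) * ((R * r) ^ k / (k.factorial : ℝ)) := by
  have hR : 0 ≤ R := le_trans (abs_nonneg s) hs
  have hfac : (k.factorial : ℝ) ≤ ((k+m).factorial : ℝ) := by
    exact_mod_cast Nat.factorial_le (Nat.le_add_right k m)
  have hfk : (0:ℝ) < (k.factorial : ℝ) := by exact_mod_cast Nat.factorial_pos k
  have hfkm : (0:ℝ) < ((k+m).factorial : ℝ) := by exact_mod_cast Nat.factorial_pos (k+m)
  simp only [norm_smul, norm_div, norm_mul, norm_pow, norm_inv, Complex.norm_real,
    Real.norm_eq_abs, RCLike.norm_natCast]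
  calc |s| ^ (k+m) / ((k+m).factorial : ℝ) * ‖x‖
      ≤ R ^ (k+m) / (k.factorial : ℝ) * (C * r ^ k) := by
        refine mul_le_mul ?_ hx (norm_nonneg _) (by positivity)
        exact div_le_div₀ (by positivity) (pow_le_pow_left₀ (abs_nonneg s) hs _) hfk hfac
    _ = (C * R ^ m) * ((R * r) ^ k / (k.factorial : ℝ)) := by
        rw [pow_add, mul_pow]; ring

lemma term_summable {b : ℕ → Fin n → ℂ} {C r : ℝ} (hC : 0 ≤ C) (hr : 0 ≤ r)
    (hb : ∀ k, ‖b k‖ ≤ C * r ^ k) (m : ℕ) (t : ℝ) :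
    Summable fun k : ℕ => ((t:ℂ) ^ (k+m) / (((k+m).factorial : ℕ) : ℂ)) • b k := by
  refine Summable.of_norm (Summable.of_nonneg_of_le (fun k => norm_nonneg _)
    (fun k => norm_term_le hC hr (hb k) (le_refl |t|)) ?_)
  exact (Real.summable_pow_div_factorial (|t| * r)).mul_left _

lemma scalar_summable (A : Matrix (Fin n) (Fin n) ℂ) {r : ℝ} (hr : 0 ≤ r)
    (hA : ∀ (k : ℕ) (i j : Fin n), ‖(A ^ k) i j‖ ≤ r ^ k)
    (p : ℕ) (t : ℝ) (i j : Fin n) (z : ℂ) :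
    Summable fun k : ℕ => ((t:ℂ) ^ k * (((k+p).factorial : ℕ) : ℂ)⁻¹) * ((A ^ k) i j) * z := by
  refine Summable.of_norm (Summable.of_nonneg_of_le (fun k => norm_nonneg _)
    (fun k => ?_) (((Real.summable_pow_div_factorial (|t| * r)).mul_right ‖z‖)))
  have hfac : (k.factorial : ℝ) ≤ ((k+p).factorial : ℝ) := by
    exact_mod_cast Nat.factorial_le (Nat.le_add_right k p)
  have hfk : (0:ℝ) < (k.factorial : ℝ) := by exact_mod_cast Nat.factorial_pos k
  have hfkp : (0:ℝ) < ((k+p).factorial : ℝ) := by exact_mod_cast Nat.factorial_pos (k+p)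
  simp only [norm_smul, norm_div, norm_mul, norm_pow, norm_inv, Complex.norm_real,
    Real.norm_eq_abs, RCLike.norm_natCast]
  calc |t| ^ k * ((k+p).factorial : ℝ)⁻¹ * ‖(A ^ k) i j‖ * ‖z‖
      ≤ |t| ^ k * (k.factorial : ℝ)⁻¹ * r ^ k * ‖z‖ := by
        refine mul_le_mul_of_nonneg_right ?_ (norm_nonneg z)
        refine mul_le_mul (mul_le_mul_of_nonneg_left ?_ (by positivity)) ?_ ?_ (by positivity)
        · exact inv_anti₀ hfk hfac
        · exact hA k i j
        · exact norm_nonneg _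
    _ = (|t| * r) ^ k / (k.factorial : ℝ) * ‖z‖ := by rw [mul_pow]; ring

lemma w_eq (A : Matrix (Fin n) (Fin n) ℂ) (v : Fin n → ℂ) (p : ℕ) (t : ℝ) :
    ((t:ℂ)^p) • (matPhi p (t • A)).mulVec v
      = ∑' k : ℕ, ((t:ℂ) ^ (k+p) / (((k+p).factorial : ℕ) : ℂ)) • (A ^ k).mulVec v := by
  classical
  obtain ⟨r, hr, hA⟩ := entry_bound A
  obtain ⟨C, r', hC, hr', hb⟩ := vec_bound A v
  set c : ℕ → ℂ := fun k => (t:ℂ)^k * (((k+p).factorial : ℕ) : ℂ)⁻¹ with hc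
  have hM : matPhi p (t • A) = ∑' k : ℕ, c k • A ^ k := by
    rw [matPhi]
    refine tsum_congr fun k => ?_
    have hsmul : (t • A) = ((t:ℂ)) • A := by
      ext i j; simp [Complex.real_smul]
    rw [hsmul, smul_pow, smul_smul, hc, mul_comm]
  -- summability of the matrix series, entrywise
  have hsc : ∀ i j : Fin n, Summable fun k : ℕ => c k * (A ^ k) i j := by
    intro i j
    simpa using scalar_summable A hr hA p t i j 1
  have hsM : Summable fun k : ℕ => c k • A ^ k := by
    refine Pi.summable.mpr ?_
    intro i
    rw [Pi.summable]
    intro j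
    simpa [Matrix.smul_apply, smul_eq_mul] using hsc i j
  have hentry : ∀ i j : Fin n, (∑' k : ℕ, c k • A ^ k) i j = ∑' k : ℕ, c k * (A ^ k) i j := by
    intro i j
    have h1 : (∑' k : ℕ, c k • A ^ k) i = ∑' k : ℕ, (c k • A ^ k) i := tsum_apply hsM
    have h2 : (∑' k : ℕ, (c k • A ^ k) i) j = ∑' k : ℕ, (c k • A ^ k) i j :=
      tsum_apply (Pi.summable.mp hsM i)
    rw [h1, h2]
    exact tsum_congr fun k => by simp [Matrix.smul_apply, smul_eq_mul]
  funext i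
  rw [Pi.smul_apply, smul_eq_mul, hM]
  have hmv : ((∑' k : ℕ, c k • A ^ k).mulVec v) i = ∑ j, (∑' k : ℕ, c k * (A ^ k) i j) * v j := by
    simp only [Matrix.mulVec, dotProduct]
    exact Finset.sum_congr rfl fun j _ => by beta_reduce; rw [hentry i j]
  rw [hmv]
  have hswap : ∑ j, (∑' k : ℕ, c k * (A ^ k) i j) * v j
      = ∑' k : ℕ, ∑ j, c k * (A ^ k) i j * v j := by
    calc ∑ j, (∑' k : ℕ, c k * (A ^ k) i j) * v j
        = ∑ j, ∑' k : ℕ, c k * (A ^ k) i j * v j :=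
          Finset.sum_congr rfl fun j _ => tsum_mul_right.symm
      _ = ∑' k : ℕ, ∑ j, c k * (A ^ k) i j * v j :=
          (Summable.tsum_finsetSum fun j _ => (hsc i j).mul_right (v j)).symm
  rw [hswap, ← tsum_mul_left, tsum_apply (term_summable hC hr' hb p t)]
  refine tsum_congr fun k => ?_
  rw [Pi.smul_apply, smul_eq_mul]
  have hmv2 : (A ^ k).mulVec v i = ∑ j, (A ^ k) i j * v j := by
    simp [Matrix.mulVec, dotProduct]
  rw [hmv2, Finset.mul_sum, Finset.mul_sum]
  refine Finset.sum_congr rfl fun j _ => ?_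
  rw [hc]
  simp only []
  rw [pow_add]
  ring

end Statement0Aux

open Statement0Aux

/-- for `p ≥ 1`, `w_p(t) = t^p φ_p(tA) v` satisfies `w_p(0) = 0` and
`w_p'(t) = A w_p(t) + (t^{p−1}/(p−1)!) v` for every `t ∈ ℝ`. -/
theorem statement0 (n : ℕ) (A : Matrix (Fin n) (Fin n) ℂ) (v : Fin n → ℂ)
    (p : ℕ) (hp : 1 ≤ p) (w : ℝ → Fin n → ℂ)
    (hw : ∀ t : ℝ, w t = ((t : ℂ) ^ p) • (matPhi p (t • A)).mulVec v) :
    w 0 = 0 ∧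
      ∀ t : ℝ,
        HasDerivAt w
          (A.mulVec (w t) + (((t : ℂ) ^ (p - 1)) / ((p - 1).factorial : ℂ)) • v) t := by
  obtain ⟨q, rfl⟩ : ∃ q, p = q + 1 := ⟨p - 1, (Nat.succ_pred_eq_of_pos hp).symm⟩
  obtain ⟨C, r, hC, hr, hb⟩ := vec_bound A v
  set b : ℕ → Fin n → ℂ := fun k => (A ^ k).mulVec v with hbdef
  have hwf : w = fun t : ℝ =>
      ∑' k : ℕ, ((t:ℂ) ^ (k+(q+1)) / (((k+(q+1)).factorial : ℕ) : ℂ)) • b k := by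
    funext t; rw [hw t, w_eq]
  constructor
  · rw [hw 0]
    simp
  · intro t₀
    rw [hwf]
    set R : ℝ := |t₀| + 1 with hR
    have hR0 : 0 < R := by positivity
    have ht₀ : t₀ ∈ Set.Ioo (-R) R := by
      constructor
      · have := neg_abs_le t₀; rw [hR]; linarith
      · have := le_abs_self t₀; rw [hR]; linarith
    have hderiv : ∀ (k : ℕ) (y : ℝ), y ∈ Set.Ioo (-R) R →
        HasDerivAt (fun s : ℝ =>
            ((s:ℂ) ^ (k+(q+1)) / (((k+(q+1)).factorial : ℕ) : ℂ)) • b k)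
          (((y:ℂ) ^ (k+q) / (((k+q).factorial : ℕ) : ℂ)) • b k) y := by
      intro k y _
      have h1 : HasDerivAt (fun z : ℂ => z ^ (k+q+1))
          ((((k+q+1) : ℕ) : ℂ) * (y:ℂ) ^ (k+q)) (y:ℂ) := by
        simpa using hasDerivAt_pow (k+q+1) ((y:ℂ))
      have h2 := (h1.comp_ofReal).div_const ((((k+q+1).factorial : ℕ)) : ℂ)
      have h3 := h2.smul_const (b k)
      have hval : ((((k+q+1) : ℕ) : ℂ) * (y:ℂ) ^ (k+q) / (((k+q+1).factorial : ℕ) : ℂ)) • b k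
          = ((y:ℂ) ^ (k+q) / (((k+q).factorial : ℕ) : ℂ)) • b k := by
        congr 1
        rw [Nat.factorial_succ]
        have h4 : ((((k+q)+1) : ℕ) : ℂ) ≠ 0 := by exact_mod_cast Nat.succ_ne_zero (k+q)
        have h5 : (((k+q).factorial : ℕ) : ℂ) ≠ 0 := by
          exact_mod_cast Nat.factorial_ne_zero (k+q)
        push_cast
        push_cast at h4
        exact mul_div_mul_left _ _ h4
      rw [hval] at h3
      exact h3
    have hbound : ∀ (k : ℕ) (y : ℝ), y ∈ Set.Ioo (-R) R →
        ‖((y:ℂ) ^ (k+q) / (((k+q).factorial : ℕ) : ℂ)) • b k‖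
          ≤ (C * R ^ q) * ((R * r) ^ k / (k.factorial : ℝ)) := by
      intro k y hy
      have hyR : |y| ≤ R := le_of_lt (abs_lt.mpr ⟨hy.1, hy.2⟩)
      exact norm_term_le hC hr (hb k) hyR
    have main := hasDerivAt_tsum_of_isPreconnected
      ((Real.summable_pow_div_factorial (R * r)).mul_left (C * R ^ q))
      isOpen_Ioo (isPreconnected_Ioo)
      hderiv hbound ht₀ (term_summable hC hr hb (q+1) t₀) ht₀
    have hval2 : (∑' k : ℕ, ((t₀:ℂ) ^ (k+q) / (((k+q).factorial : ℕ) : ℂ)) • b k)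
        = A.mulVec (∑' k : ℕ, ((t₀:ℂ) ^ (k+(q+1)) / (((k+(q+1)).factorial : ℕ) : ℂ)) • b k)
          + (((t₀:ℂ) ^ ((q+1) - 1)) / (((q+1) - 1).factorial : ℂ)) • v := by
      have hsum' : Summable fun k : ℕ =>
          ((t₀:ℂ) ^ (k+q) / (((k+q).factorial : ℕ) : ℂ)) • b k :=
        term_summable hC hr hb q t₀
      rw [Summable.tsum_eq_zero_add hsum']
      have hmap : A.mulVec (∑' k : ℕ,
            ((t₀:ℂ) ^ (k+(q+1)) / (((k+(q+1)).factorial : ℕ) : ℂ)) • b k)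
          = ∑' k : ℕ, ((t₀:ℂ) ^ (k+(q+1)) / (((k+(q+1)).factorial : ℕ) : ℂ)) • b (k+1) := by
        have hL := (LinearMap.toContinuousLinearMap (Matrix.mulVecLin A)).map_tsum
          (term_summable hC hr hb (q+1) t₀)
        simp only [LinearMap.coe_toContinuousLinearMap', Matrix.mulVecLin_apply] at hL
        rw [hL]
        refine tsum_congr fun k => ?_
        rw [Matrix.mulVec_smul]
        congr 1
        rw [hbdef]
        simp only [Matrix.mulVec_mulVec]
        rw [← pow_succ']
      rw [hmap]
      rw [add_comm]
      congr 1
      · refine tsum_congr fun k => ?_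
        have hidx : k + 1 + q = k + (q+1) := by omega
        rw [hidx]
      · simp [hbdef]
    rw [hval2] at main
    exact main
end

section
/- In the perturbed Arnoldi setting with no perturbation (U_m = 0) and ‖v_{m+1}‖₂ ≤ 1, if A is dissipative, then for every p ∈ ℕ₀ and t > 0 the error norm is bounded by the defect integral: ‖l_{p,m}(t)‖₂ ≤ (h_{m+1,m}/t^p) ∫_0^t |δ_{p,m}(s)| ds = L_{p,m}(t). -/
set_option linter.unusedSectionVars false
set_option maxHeartbeats 2000000
set_option synthInstance.maxHeartbeats 400000



open MeasureTheory

section Aux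

variable {N : Type*} [Fintype N] [DecidableEq N]

/-- Euclidean operator norm of a matrix. -/
noncomputable def opN (M : Matrix N N ℂ) : ℝ := ‖Matrix.toEuclideanCLM (𝕜 := ℂ) M‖

lemma opN_nonneg (M : Matrix N N ℂ) : 0 ≤ opN M := norm_nonneg _

lemma vnorm_eq_norm (x : N → ℂ) :
    vnorm x = ‖(WithLp.equiv 2 (N → ℂ)).symm x‖ := by
  rw [vnorm, EuclideanSpace.norm_eq]
  congr 1

lemma CLM_pow_apply_norm {E : Type*} [NormedAddCommGroup E] [NormedSpace ℂ E]
    (f : E →L[ℂ] E) (k : ℕ) (x : E) : ‖(f ^ k) x‖ ≤ ‖f‖ ^ k * ‖x‖ := by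
  induction k generalizing x with
  | zero => simp
  | succ k ih =>
      rw [pow_succ, ContinuousLinearMap.mul_apply]
      calc ‖(f ^ k) (f x)‖ ≤ ‖f‖ ^ k * ‖f x‖ := ih (f x)
        _ ≤ ‖f‖ ^ k * (‖f‖ * ‖x‖) := by
            exact mul_le_mul_of_nonneg_left (f.le_opNorm x) (by positivity)
        _ = ‖f‖ ^ (k + 1) * ‖x‖ := by ring

lemma mulVec_entry_bound (M : Matrix N N ℂ) (x : N → ℂ) (i : N) (k : ℕ) :
    ‖(M ^ k).mulVec x i‖ ≤ opN M ^ k * vnorm x := by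
  classical
  set x' : EuclideanSpace ℂ N := (WithLp.equiv 2 (N → ℂ)).symm x with hx'
  have h1 : (Matrix.toEuclideanCLM (𝕜 := ℂ) (M ^ k)) x'
      = (WithLp.equiv 2 (N → ℂ)).symm ((M ^ k).mulVec x) := by
    rw [hx', WithLp.equiv_symm_apply, Matrix.toEuclideanCLM_toLp]
  have h2 : ‖(M ^ k).mulVec x i‖
      ≤ ‖(Matrix.toEuclideanCLM (𝕜 := ℂ) (M ^ k)) x'‖ := by
    rw [h1]
    have : ‖(M ^ k).mulVec x i‖
        = ‖((WithLp.equiv 2 (N → ℂ)).symm ((M ^ k).mulVec x) : EuclideanSpace ℂ N) i‖ := rfl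
    rw [this, EuclideanSpace.norm_eq]
    have h3 : ‖((WithLp.equiv 2 (N → ℂ)).symm ((M ^ k).mulVec x) : EuclideanSpace ℂ N) i‖ ^ 2
        ≤ ∑ j, ‖((WithLp.equiv 2 (N → ℂ)).symm ((M ^ k).mulVec x) : EuclideanSpace ℂ N) j‖ ^ 2 :=
      Finset.single_le_sum (f := fun j => ‖((WithLp.equiv 2 (N → ℂ)).symm
        ((M ^ k).mulVec x) : EuclideanSpace ℂ N) j‖ ^ 2) (fun j _ => by positivity)
        (Finset.mem_univ i)
    calc _ = Real.sqrt (‖((WithLp.equiv 2 (N → ℂ)).symm ((M ^ k).mulVec x) :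
            EuclideanSpace ℂ N) i‖ ^ 2) := by rw [Real.sqrt_sq (norm_nonneg _)]
      _ ≤ _ := Real.sqrt_le_sqrt h3
  rw [map_pow] at h2
  calc ‖(M ^ k).mulVec x i‖
      ≤ ‖(Matrix.toEuclideanCLM (𝕜 := ℂ) M ^ k) x'‖ := h2
    _ ≤ opN M ^ k * ‖x'‖ := CLM_pow_apply_norm _ _ _
    _ = opN M ^ k * vnorm x := by rw [vnorm_eq_norm]

lemma summable_aux (c : ℝ) (p : ℕ) : Summable (fun k : ℕ => |c| ^ k / (k + p).factorial) := by
  refine Summable.of_nonneg_of_le (fun k => by positivity) (fun k => ?_)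
    (Real.summable_pow_div_factorial |c|)
  gcongr
  exact Nat.le_add_right k p


lemma mulVec_single_entry (M : Matrix N N ℂ) (i j : N) :
    M.mulVec (Pi.single j 1) i = M i j := by
  simp [Matrix.mulVec, dotProduct, Pi.single_apply]

lemma vnorm_single (j : N) : vnorm (Pi.single j (1 : ℂ)) = 1 := by
  rw [vnorm, Finset.sum_eq_single j]
  · simp
  · intro b _ hb; simp [Pi.single_apply, hb]
  · intro hj; exact absurd (Finset.mem_univ j) hj

lemma entry_bound (M : Matrix N N ℂ) (i j : N) (k : ℕ) :
    ‖(M ^ k) i j‖ ≤ opN M ^ k := by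
  have := mulVec_entry_bound M (Pi.single j 1) i k
  rwa [mulVec_single_entry, vnorm_single, mul_one] at this

/-- The evaluation `X ↦ (X.mulVec x) i` as a linear map. -/
noncomputable def evalLM {I J : Type*} [Fintype I] [Fintype J] (x : J → ℂ) (i : I) :
    Matrix I J ℂ →ₗ[ℂ] ℂ where
  toFun X := X.mulVec x i
  map_add' X Y := by simp [Matrix.add_mulVec]
  map_smul' c X := by simp [Matrix.smul_mulVec]

lemma summable_matPhi (p : ℕ) (M : Matrix N N ℂ) :
    Summable (fun k : ℕ => ((k + p).factorial : ℂ)⁻¹ • M ^ k) := by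
  refine Pi.summable.mpr ?_
  intro i
  rw [Pi.summable]
  intro j
  apply Summable.of_norm
  refine Summable.of_nonneg_of_le (fun k => norm_nonneg _) (fun k => ?_)
    ((summable_aux (opN M) p).mul_left 1)
  have h1 : ‖(((k + p).factorial : ℂ)⁻¹ • M ^ k) i j‖
      = ((k + p).factorial : ℝ)⁻¹ * ‖(M ^ k) i j‖ := by
    simp [Matrix.smul_apply, norm_smul]
  rw [h1, abs_of_nonneg (opN_nonneg M)]
  rw [one_mul, div_eq_inv_mul]
  exact mul_le_mul_of_nonneg_left (entry_bound M i j k) (by positivity)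

lemma matPhi_linear (p : ℕ) (M : Matrix N N ℂ) (g : Matrix N N ℂ →ₗ[ℂ] ℂ) :
    g (matPhi p M) = ∑' k : ℕ, ((k + p).factorial : ℂ)⁻¹ * g (M ^ k) := by
  have hg : Continuous g := g.continuous_of_finiteDimensional
  let G : Matrix N N ℂ →L[ℂ] ℂ := ⟨g, hg⟩
  have : G (matPhi p M) = ∑' k : ℕ, G (((k + p).factorial : ℂ)⁻¹ • M ^ k) :=
    G.map_tsum (summable_matPhi p M)
  simpa [G, _root_.map_smul, smul_eq_mul] using this

lemma matPhi_mulVec (p : ℕ) (M : Matrix N N ℂ) (x : N → ℂ) (i : N) :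
    (matPhi p M).mulVec x i = ∑' k : ℕ, ((k + p).factorial : ℂ)⁻¹ * ((M ^ k).mulVec x i) :=
  matPhi_linear p M (evalLM x i)

lemma real_smul_matrix (t : ℝ) (M : Matrix N N ℂ) : t • M = (t : ℂ) • M := by
  ext i j; simp [Matrix.smul_apply, Complex.real_smul]

lemma matPhi_smul_mulVec (p : ℕ) (t : ℝ) (M : Matrix N N ℂ) (x : N → ℂ) (i : N) :
    (matPhi p (t • M)).mulVec x i
      = ∑' k : ℕ, (t : ℂ) ^ k * ((k + p).factorial : ℂ)⁻¹ * ((M ^ k).mulVec x i) := by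
  rw [real_smul_matrix, matPhi_mulVec]
  congr 1
  funext k
  rw [smul_pow, Matrix.smul_mulVec]
  simp [smul_eq_mul]
  ring

lemma real_smul_matrix' {I J : Type*} (t : ℝ) (M : Matrix I J ℂ) : t • M = (t : ℂ) • M := by
  ext i j
  show t • M i j = (t : ℂ) • M i j
  rw [Complex.real_smul, smul_eq_mul]

lemma matPhi_hasSum (p : ℕ) (M : Matrix N N ℂ) (g : Matrix N N ℂ →ₗ[ℂ] ℂ) :
    HasSum (fun k : ℕ => ((k + p).factorial : ℂ)⁻¹ * g (M ^ k)) (g (matPhi p M)) := by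
  have hg : Continuous g := g.continuous_of_finiteDimensional
  let G : Matrix N N ℂ →L[ℂ] ℂ := ⟨g, hg⟩
  have h1 : HasSum (fun k : ℕ => G (((k + p).factorial : ℂ)⁻¹ • M ^ k)) (G (matPhi p M)) :=
    (summable_matPhi p M).hasSum.mapL G
  have h2 : (fun k : ℕ => G (((k + p).factorial : ℂ)⁻¹ • M ^ k))
      = fun k : ℕ => ((k + p).factorial : ℂ)⁻¹ * g (M ^ k) := by
    funext k
    show g (((k + p).factorial : ℂ)⁻¹ • M ^ k) = _
    rw [LinearMap.map_smul, smul_eq_mul]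
  rwa [h2] at h1

lemma matPhi_smul_hasSum (p : ℕ) (t : ℝ) (M : Matrix N N ℂ) (g : Matrix N N ℂ →ₗ[ℂ] ℂ) :
    HasSum (fun k : ℕ => (t : ℂ) ^ k * ((k + p).factorial : ℂ)⁻¹ * g (M ^ k))
      (g (matPhi p (t • M))) := by
  rw [real_smul_matrix' t M]
  have h1 := matPhi_hasSum p ((t : ℂ) • M) g
  have h2 : (fun k : ℕ => ((k + p).factorial : ℂ)⁻¹ * g (((t:ℂ) • M) ^ k))
      = fun k : ℕ => (t : ℂ) ^ k * ((k + p).factorial : ℂ)⁻¹ * g (M ^ k) := by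
    funext k
    rw [smul_pow, LinearMap.map_smul, smul_eq_mul]
    ring
  rwa [h2] at h1

/-- `X ↦ ((V * X).mulVec x) i` as a linear map. -/
noncomputable def leftMulLM {I J : Type*} [Fintype I] [Fintype J] [DecidableEq J]
    (V : Matrix I J ℂ) (x : J → ℂ) (i : I) : Matrix J J ℂ →ₗ[ℂ] ℂ where
  toFun X := ((V * X).mulVec x) i
  map_add' X Y := by simp [Matrix.mul_add, Matrix.add_mulVec]
  map_smul' a X := by
    simp [Matrix.mul_smul, Matrix.smul_mulVec]

/-- `X ↦ ((X * V).mulVec x) i` as a linear map. -/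
noncomputable def rightMulLM {I J : Type*} [Fintype I] [Fintype J] [DecidableEq I]
    (V : Matrix I J ℂ) (x : J → ℂ) (i : I) : Matrix I I ℂ →ₗ[ℂ] ℂ where
  toFun X := ((X * V).mulVec x) i
  map_add' X Y := by simp [Matrix.add_mul, Matrix.add_mulVec]
  map_smul' a X := by
    simp [Matrix.smul_mul, Matrix.smul_mulVec]

end Aux


section Chunk2
open Finset Matrix

/-- Telescoping identity `A^k V - V H^k = ∑_{j<k} A^{k-1-j} (AV - VH) H^j`. -/
lemma telescope {I J : Type*} [Fintype I] [Fintype J] [DecidableEq I] [DecidableEq J]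
    (A : Matrix I I ℂ) (V : Matrix I J ℂ) (H : Matrix J J ℂ) (k : ℕ) :
    A ^ k * V - V * H ^ k = ∑ j ∈ Finset.range k, A ^ (k - 1 - j) * (A * V - V * H) * H ^ j := by
  induction k with
  | zero => simp
  | succ k ih =>
      have step : A ^ (k+1) * V - V * H ^ (k+1)
          = A * (A ^ k * V - V * H ^ k) + (A * V - V * H) * H ^ k := by
        rw [pow_succ', pow_succ']
        simp only [Matrix.mul_sub, Matrix.sub_mul, Matrix.mul_assoc]
        abel
      rw [step, ih, Finset.sum_range_succ]
      congr 1
      · rw [Matrix.mul_sum]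
        refine Finset.sum_congr rfl fun j hj => ?_
        rw [Finset.mem_range] at hj
        rw [← Matrix.mul_assoc, ← Matrix.mul_assoc, ← pow_succ']
        congr 3
        omega
      · rw [show k + 1 - 1 - k = 0 by omega, pow_zero, Matrix.one_mul]

/-- `(X ⬝ (u vᵀ) ⬝ Y).mulVec x = (v ⬝ᵥ Y.mulVec x) • X.mulVec u` entrywise. -/
lemma sandwich {I J : Type*} [Fintype I] [Fintype J]
    (X : Matrix I I ℂ) (u : I → ℂ) (w : J → ℂ) (Y : Matrix J J ℂ) (x : J → ℂ) (i : I) :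
    ((X * Matrix.vecMulVec u w * Y).mulVec x) i
      = (w ⬝ᵥ Y.mulVec x) * (X.mulVec u i) := by
  rw [← Matrix.mulVec_mulVec, ← Matrix.mulVec_mulVec]
  have h1 : (Matrix.vecMulVec u w).mulVec (Y.mulVec x) = (w ⬝ᵥ Y.mulVec x) • u := by
    funext a
    simp [Matrix.mulVec, Matrix.vecMulVec_apply, dotProduct, Finset.mul_sum,
      mul_assoc, smul_eq_mul, Finset.sum_mul]
    exact Finset.sum_congr rfl fun b _ => Finset.sum_congr rfl fun b' _ => by ring
  rw [h1, Matrix.mulVec_smul]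
  simp [smul_eq_mul]

/-- Reindexing a summable double series over the triangle. -/
lemma tsum_triangle (g : ℕ → ℕ → ℂ) (hg : Summable fun q : ℕ × ℕ => g q.1 q.2) :
    ∑' q : ℕ × ℕ, g q.1 q.2 = ∑' k : ℕ, ∑ j ∈ Finset.range k, g (k - 1 - j) j := by
  classical
  set e : ℕ × ℕ → ℕ × ℕ := fun q => (q.1 + q.2 + 1, q.2) with he_def
  set G : ℕ × ℕ → ℂ := fun q => if q.2 < q.1 then g (q.1 - 1 - q.2) q.2 else 0 with hG_def
  have he : Function.Injective e := by
    intro a b hab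
    simp only [e, Prod.mk.injEq] at hab
    obtain ⟨h1, h2⟩ := hab
    exact Prod.ext (by omega) h2
  have hcomp : ∀ q : ℕ × ℕ, G (e q) = g q.1 q.2 := by
    intro q
    simp only [G, e]
    rw [if_pos (by omega)]
    congr 1
    omega
  have hsupp : ∀ x ∉ Set.range e, G x = 0 := by
    intro x hx
    by_contra hne
    apply hx
    have hlt : x.2 < x.1 := by
      by_contra hge
      exact hne (if_neg hge)
    exact ⟨(x.1 - 1 - x.2, x.2), Prod.ext (by simp [e]; omega) rfl⟩
  have hsupp' : Function.support G ⊆ Set.range e := by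
    intro x hx
    by_contra hxr
    exact hx (hsupp x hxr)
  have h1 : ∑' q : ℕ × ℕ, g q.1 q.2 = ∑' q, G q := by
    rw [← Function.Injective.tsum_eq he (f := G) hsupp']
    exact tsum_congr fun q => (hcomp q).symm
  have hGsum : Summable G := by
    rw [← Function.Injective.summable_iff he hsupp]
    exact hg.congr fun q => (hcomp q).symm
  rw [h1, hGsum.tsum_prod' (fun k => summable_of_ne_finset_zero
    (s := Finset.range k) (fun j hj => if_neg (by simpa using hj)))]
  refine tsum_congr fun k => ?_
  rw [tsum_eq_sum (s := Finset.range k) (fun j hj => if_neg (by simpa using hj))]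
  exact Finset.sum_congr rfl fun j hj => if_pos (by simpa using hj)

/-- Scaled Beta integral with natural exponents. -/
lemma beta_nat (a b : ℕ) {t : ℝ} (ht : 0 < t) :
    ∫ s in (0:ℝ)..t, ((s:ℂ)) ^ b * (((t:ℝ):ℂ) - (s:ℂ)) ^ a
      = (t:ℂ) ^ (a + b + 1) *
        ((b.factorial : ℂ) * (a.factorial : ℂ) / ((a + b + 1).factorial : ℂ)) := by
  have hscaled := Complex.betaIntegral_scaled ((b:ℂ) + 1) ((a:ℂ) + 1) ht
  simp only [add_sub_cancel_right] at hscaled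
  have hlhs : ∫ s in (0:ℝ)..t, ((s:ℂ)) ^ b * (((t:ℝ):ℂ) - (s:ℂ)) ^ a
      = ∫ s in (0:ℝ)..t, ((s:ℂ)) ^ ((b:ℂ)) * (((t:ℝ):ℂ) - (s:ℂ)) ^ ((a:ℂ)) := by
    refine intervalIntegral.integral_congr fun s _ => ?_
    rw [Complex.cpow_natCast, Complex.cpow_natCast]
  have hbeta : Complex.betaIntegral ((b:ℂ) + 1) ((a:ℂ) + 1)
      = (b.factorial : ℂ) * (a.factorial : ℂ) / ((a + b + 1).factorial : ℂ) := by
    have h1 : Complex.Gamma ((b:ℂ) + 1) * Complex.Gamma ((a:ℂ) + 1)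
        = Complex.Gamma (((b:ℂ) + 1) + ((a:ℂ) + 1)) *
          Complex.betaIntegral ((b:ℂ) + 1) ((a:ℂ) + 1) :=
      Complex.Gamma_mul_Gamma_eq_betaIntegral
        (by simp [Complex.add_re]; positivity) (by simp [Complex.add_re]; positivity)
    have h2 : ((b:ℂ) + 1) + ((a:ℂ) + 1) = ((a + b + 1 : ℕ) : ℂ) + 1 := by push_cast; ring
    rw [h2, Complex.Gamma_nat_eq_factorial, Complex.Gamma_nat_eq_factorial,
      Complex.Gamma_nat_eq_factorial] at h1
    have hne : ((a + b + 1).factorial : ℂ) ≠ 0 := by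
      exact Nat.cast_ne_zero.mpr (Nat.factorial_ne_zero _)
    rw [eq_div_iff hne]
    linear_combination -h1
  have hexp : ((b:ℂ) + 1) + ((a:ℂ) + 1) - 1 = ((a + b + 1 : ℕ) : ℂ) := by push_cast; ring
  rw [hlhs, hscaled, hexp, Complex.cpow_natCast, hbeta]

end Chunk2


section Chunk3
open NormedSpace

variable {n : ℕ} (A : Matrix (Fin n) (Fin n) ℂ)

local notation "EE" => EuclideanSpace ℂ (Fin n)

lemma real_smul_CLM (τ : ℝ) (f : EE →L[ℂ] EE) : τ • f = (τ : ℂ) • f := by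
  refine ContinuousLinearMap.ext fun x => ?_
  rw [ContinuousLinearMap.smul_apply, ContinuousLinearMap.smul_apply]
  rw [show ((τ : ℂ)) = τ • (1 : ℂ) by simp, smul_assoc, one_smul]

/-- coordinates of `exp (τ • toEuclideanCLM A)` applied to a vector. -/
lemma exp_coord (τ : ℝ) (x : Fin n → ℂ) (i : Fin n) :
    (exp (τ • (Matrix.toEuclideanCLM (𝕜 := ℂ) A)) ((WithLp.equiv 2 (Fin n → ℂ)).symm x)) i
      = ∑' a : ℕ, (τ : ℂ) ^ a * ((a.factorial : ℂ))⁻¹ * ((A ^ a).mulVec x i) := by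
  set f := Matrix.toEuclideanCLM (𝕜 := ℂ) A with hf
  set x' : EE := (WithLp.equiv 2 (Fin n → ℂ)).symm x with hx'
  have hcont : Continuous (fun g : EE →L[ℂ] EE => (g x') i) :=
    (EuclideanSpace.proj (𝕜 := ℂ) i).continuous.comp
      (ContinuousLinearMap.apply ℂ EE x').continuous
  let Φ : (EE →L[ℂ] EE) →L[ℝ] ℂ :=
    { toFun := fun g => (g x') i
      map_add' := fun g₁ g₂ => rfl
      map_smul' := fun c g => rfl
      cont := hcont }
  have hsum : Summable fun k : ℕ => (k.factorial⁻¹ : ℝ) • (τ • f) ^ k :=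
    expSeries_summable' (𝕂 := ℝ) (τ • f)
  have h1 : (exp (τ • f)) x' i = Φ (exp (τ • f)) := rfl
  rw [h1, exp_eq_tsum ℝ, Φ.map_tsum hsum]
  refine tsum_congr fun k => ?_
  have h2 : (τ • f) ^ k = (τ : ℂ) ^ k • (Matrix.toEuclideanCLM (𝕜 := ℂ) (A ^ k)) := by
    rw [real_smul_CLM, smul_pow, map_pow]
  have h3 : (Matrix.toEuclideanCLM (𝕜 := ℂ) (A ^ k)) x'
      = (WithLp.equiv 2 (Fin n → ℂ)).symm ((A ^ k).mulVec x) := by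
    rw [hx', WithLp.equiv_symm_apply, Matrix.toEuclideanCLM_toLp]
  show (k.factorial⁻¹ : ℝ) • (((τ • f) ^ k) x' i) = _
  rw [h2]
  show (k.factorial⁻¹ : ℝ) • (((τ : ℂ) ^ k • ((Matrix.toEuclideanCLM (𝕜 := ℂ) (A ^ k)) x')) i) = _
  rw [h3]
  show (k.factorial⁻¹ : ℝ) • ((τ : ℂ) ^ k • ((A ^ k).mulVec x i)) = _
  rw [Complex.real_smul, smul_eq_mul]
  push_cast
  ring

lemma exp_contraction (hdiss : Dissipative A) (τ : ℝ) (hτ : 0 ≤ τ) (x' : EE) :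
    ‖exp (τ • (Matrix.toEuclideanCLM (𝕜 := ℂ) A)) x'‖ ≤ ‖x'‖ := by
  set f := Matrix.toEuclideanCLM (𝕜 := ℂ) A with hf
  set y : ℝ → EE := fun s => exp (s • f) x' with hy_def
  have hy : ∀ s : ℝ, HasDerivAt y (f (y s)) s := by
    intro s
    have h1 := hasDerivAt_exp_smul_const' (𝕂 := ℝ) f s
    have h2 := ((ContinuousLinearMap.apply ℂ EE x').restrictScalars
      ℝ).hasFDerivAt.comp_hasDerivAt s h1
    exact h2
  have hg : ∀ s : ℝ, HasDerivAt (fun u => ‖y u‖ ^ 2)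
      (2 * (RCLike.re (inner (𝕜 := ℂ) (y s) (f (y s))))) s := by
    intro s
    have h1 : HasDerivAt (fun u => (inner ℂ (y u) (y u) : ℂ))
        ((inner ℂ (y s) (f (y s)) : ℂ) + inner ℂ (f (y s)) (y s)) s := (hy s).inner ℂ (hy s)
    have h2 := (Complex.reCLM.hasFDerivAt.comp_hasDerivAt s h1)
    have h3 : Complex.reCLM ((inner ℂ (y s) (f (y s)) : ℂ) + inner ℂ (f (y s)) (y s))
        = 2 * RCLike.re (inner (𝕜 := ℂ) (y s) (f (y s))) := by
      have hcs : (inner (𝕜 := ℂ) (f (y s)) (y s))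
          = (starRingEnd ℂ) (inner (𝕜 := ℂ) (y s) (f (y s))) := by
        rw [inner_conj_symm]
      simp only [ContinuousLinearMap.coe_coe, Complex.reCLM_apply, Complex.add_re, hcs,
        Complex.conj_re, RCLike.re_to_complex]
      ring
    rw [h3] at h2
    have h4 : (fun u => Complex.reCLM ((inner ℂ (y u) (y u) : ℂ))) = fun u => ‖y u‖ ^ 2 := by
      funext u
      simpa using inner_self_eq_norm_sq (𝕜 := ℂ) (y u)
    rw [← h4]
    exact h2
  have hnonpos : ∀ s : ℝ, 2 * RCLike.re (inner (𝕜 := ℂ) (y s) (f (y s))) ≤ 0 := by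
    intro s
    have h5 : RCLike.re (inner (𝕜 := ℂ) (y s) (f (y s)))
        = (dotProduct (star (WithLp.equiv 2 (Fin n → ℂ) (y s)))
            (A.mulVec (WithLp.equiv 2 (Fin n → ℂ) (y s)))).re := by
      rw [EuclideanSpace.inner_eq_star_dotProduct, Matrix.ofLp_toEuclideanCLM,
        dotProduct_comm, RCLike.re_to_complex]
      rfl
    rw [h5]
    have := hdiss (WithLp.equiv 2 (Fin n → ℂ) (y s))
    linarith
  have hanti : AntitoneOn (fun u => ‖y u‖ ^ 2) (Set.Ici (0 : ℝ)) := by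
    refine antitoneOn_of_deriv_nonpos (convex_Ici 0) ?_ ?_ ?_
    · exact fun s _ => ((hg s).continuousAt).continuousWithinAt
    · exact fun s _ => ((hg s).differentiableAt).differentiableWithinAt
    · intro s _
      rw [(hg s).deriv]
      exact hnonpos s
  have h0 : y 0 = x' := by
    show exp ((0:ℝ) • f) x' = x'
    have hz : (0:ℝ) • f = 0 := zero_smul ℝ f
    rw [hz, exp_zero, ContinuousLinearMap.one_apply]
  have hle : ‖y τ‖ ^ 2 ≤ ‖x'‖ ^ 2 := by
    have h6 := hanti (Set.self_mem_Ici) hτ hτ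
    simpa [h0] using h6
  have := Real.sqrt_le_sqrt hle
  rwa [Real.sqrt_sq (norm_nonneg _), Real.sqrt_sq (norm_nonneg _)] at this

lemma exp_apply_continuous (x' : EE) :
    Continuous (fun s : ℝ => exp (s • (Matrix.toEuclideanCLM (𝕜 := ℂ) A)) x') := by
  have h1 : Continuous (fun s : ℝ => exp (s • (Matrix.toEuclideanCLM (𝕜 := ℂ) A))) :=
    (continuous_iff_continuousAt.2 fun x => (exp_analytic (𝕂 := ℝ) x).continuousAt).comp
      (continuous_id.smul continuous_const)
  exact (ContinuousLinearMap.apply ℂ EE x').continuous.comp h1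

end Chunk3



open NormedSpace

/-- in the exact (unperturbed) Arnoldi setting with `‖v_{m+1}‖₂ ≤ 1`
and `A` dissipative, the Krylov error norm is bounded by the defect integral. -/
theorem statement3 (n m : ℕ) (A : Matrix (Fin n) (Fin n) ℂ)
    (V : Matrix (Fin n) (Fin (m + 1)) ℂ) (H : Matrix (Fin (m + 1)) (Fin (m + 1)) ℂ)
    (vnext : Fin n → ℂ)
    (h β : ℝ) (hh : 0 < h) (hβ : 0 ≤ β)
    (harnoldi : A * V = V * H + h • Matrix.vecMulVec vnext (Pi.single (Fin.last m) 1))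
    (hvnext : vnorm vnext ≤ 1)
    (hdiss : Dissipative A)
    (v : Fin n → ℂ) (hv : v = (β : ℂ) • V.mulVec (Pi.single 0 1))
    (l : ℕ → ℝ → Fin n → ℂ)
    (hl : ∀ p t, l p t =
      (β : ℂ) • V.mulVec ((matPhi p (t • H)).mulVec (Pi.single 0 1))
        - (matPhi p (t • A)).mulVec v)
    (δ : ℕ → ℝ → ℂ)
    (hδ : ∀ p t, δ p t = (β : ℂ) * (t : ℂ) ^ p * (matPhi p (t • H)) (Fin.last m) 0)
    (p : ℕ) (t : ℝ) (ht : 0 < t) :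
    vnorm (l p t) ≤ (h / t ^ p) * ∫ s in (0:ℝ)..t, ‖δ p s‖ := by
  classical
  set e1 : Fin (m+1) → ℂ := Pi.single 0 1 with he1
  set eL : Fin (m+1) → ℂ := Pi.single (Fin.last m) 1 with heL
  set c : ℕ → ℂ := fun j => (H ^ j) (Fin.last m) 0 with hc_def
  set wv : ℕ → Fin n → ℂ := fun a => (A ^ a).mulVec vnext with hwv_def
  set CA : ℝ := opN A with hCA
  set CH : ℝ := opN H with hCH
  set K : ℝ := vnorm vnext with hK
  have hK0 : 0 ≤ K := Real.sqrt_nonneg _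
  have hCA0 : 0 ≤ CA := opN_nonneg A
  have hCH0 : 0 ≤ CH := opN_nonneg H
  set fA : EuclideanSpace ℂ (Fin n) →L[ℂ] EuclideanSpace ℂ (Fin n)
    := Matrix.toEuclideanCLM (𝕜 := ℂ) A with hfA
  set w' : EuclideanSpace ℂ (Fin n) := (WithLp.equiv 2 (Fin n → ℂ)).symm vnext with hw'
  -- entry bounds
  have hwb : ∀ a i, ‖wv a i‖ ≤ CA ^ a * K := fun a i => mulVec_entry_bound A vnext i a
  have hcb : ∀ j, ‖c j‖ ≤ CH ^ j := fun j => entry_bound H (Fin.last m) 0 j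
  -- the Arnoldi relation as a difference
  have h_arn : A * V - V * H = (h : ℂ) • Matrix.vecMulVec vnext eL := by
    rw [harnoldi, real_smul_matrix']
    abel
  -- summability of the key double series
  have hFsum : ∀ i : Fin n, Summable (fun q : ℕ × ℕ =>
      (t:ℂ) ^ (q.1 + q.2 + 1) * (((q.1 + q.2 + 1 + p).factorial : ℂ))⁻¹ * wv q.1 i * c q.2) := by
    intro i
    have hbase : Summable (fun q : ℕ × ℕ =>
        ((t * CA) ^ q.1 / q.1.factorial) * ((t * CH) ^ q.2 / q.2.factorial)) :=
      Summable.mul_of_nonneg (Real.summable_pow_div_factorial (t * CA))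
        (Real.summable_pow_div_factorial (t * CH))
        (fun a => by positivity) (fun j => by positivity)
    refine Summable.of_norm_bounded (hbase.mul_left (t * K)) ?_
    rintro ⟨a, j⟩
    have hfacle : (a.factorial : ℝ) * (j.factorial : ℝ) ≤ ((a + j + 1 + p).factorial : ℝ) := by
      have h1 : a.factorial * j.factorial ∣ (a + j).factorial :=
        Nat.factorial_mul_factorial_dvd_factorial_add a j
      have h2 : a.factorial * j.factorial ≤ (a + j).factorial :=
        Nat.le_of_dvd (Nat.factorial_pos _) h1
      have h3 : (a + j).factorial ≤ (a + j + 1 + p).factorial :=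
        Nat.factorial_le (by omega)
      exact_mod_cast le_trans h2 h3
    have hnorm : ‖(t:ℂ) ^ (a + j + 1) * (((a + j + 1 + p).factorial : ℂ))⁻¹ * wv a i * c j‖
        = t ^ (a + j + 1) * (((a + j + 1 + p).factorial : ℝ))⁻¹
            * ‖wv a i‖ * ‖c j‖ := by
      simp [norm_mul, map_mul, map_pow, map_inv₀,
        Complex.norm_real, Complex.norm_natCast, abs_of_pos ht]
    rw [hnorm]
    have hfac0 : (0:ℝ) < (a.factorial : ℝ) * (j.factorial : ℝ) := by positivity
    have hstep : t ^ (a + j + 1) * (((a + j + 1 + p).factorial : ℝ))⁻¹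
          * ‖wv a i‖ * ‖c j‖
        ≤ t ^ (a + j + 1) * ((a.factorial : ℝ) * (j.factorial : ℝ))⁻¹ * (CA ^ a * K)
          * (CH ^ j) := by
      have hwle := hwb a i
      have hcle := hcb j
      have hinvle : (((a + j + 1 + p).factorial : ℝ))⁻¹
          ≤ ((a.factorial : ℝ) * (j.factorial : ℝ))⁻¹ :=
        inv_anti₀ hfac0 hfacle
      have habs1 : (0:ℝ) ≤ ‖wv a i‖ := norm_nonneg _
      have habs2 : (0:ℝ) ≤ ‖c j‖ := norm_nonneg _
      have ht1 : (0:ℝ) ≤ t ^ (a + j + 1) := by positivity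
      calc t ^ (a + j + 1) * (((a + j + 1 + p).factorial : ℝ))⁻¹
            * ‖wv a i‖ * ‖c j‖
          ≤ t ^ (a + j + 1) * ((a.factorial : ℝ) * (j.factorial : ℝ))⁻¹
            * ‖wv a i‖ * ‖c j‖ := by
            have := mul_le_mul_of_nonneg_left hinvle ht1
            exact mul_le_mul_of_nonneg_right (mul_le_mul_of_nonneg_right this habs1) habs2
        _ ≤ t ^ (a + j + 1) * ((a.factorial : ℝ) * (j.factorial : ℝ))⁻¹
            * (CA ^ a * K) * ‖c j‖ := by
            refine mul_le_mul_of_nonneg_right (mul_le_mul_of_nonneg_left hwle ?_) habs2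
            positivity
        _ ≤ t ^ (a + j + 1) * ((a.factorial : ℝ) * (j.factorial : ℝ))⁻¹
            * (CA ^ a * K) * (CH ^ j) := by
            refine mul_le_mul_of_nonneg_left hcle ?_
            positivity
    refine hstep.trans (le_of_eq ?_)
    rw [pow_succ, pow_add]
    field_simp
    ring
  -- key series identity for the error entries
  have hkey : ∀ i : Fin n, l p t i = -((β:ℂ) * (h:ℂ)) * ∑' q : ℕ × ℕ,
      (t:ℂ) ^ (q.1 + q.2 + 1) * (((q.1 + q.2 + 1 + p).factorial : ℂ))⁻¹ * wv q.1 i * c q.2 := by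
    intro i
    have hsplit : l p t i = (β:ℂ) * ((leftMulLM V e1 i) (matPhi p (t • H))
        - (rightMulLM V e1 i) (matPhi p (t • A))) := by
      rw [hl, hv]
      simp only [Pi.sub_apply, Pi.smul_apply, smul_eq_mul]
      rw [Matrix.mulVec_mulVec, Matrix.mulVec_smul, Matrix.mulVec_mulVec]
      show (β:ℂ) * ((V * matPhi p (t • H)).mulVec e1 i)
          - ((β:ℂ) • ((matPhi p (t • A) * V).mulVec e1)) i = _
      show (β:ℂ) * ((V * matPhi p (t • H)).mulVec e1 i)
          - (β:ℂ) * ((matPhi p (t • A) * V).mulVec e1 i) = _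
      have hL : (leftMulLM V e1 i) (matPhi p (t • H))
          = (V * matPhi p (t • H)).mulVec e1 i := rfl
      have hR : (rightMulLM V e1 i) (matPhi p (t • A))
          = (matPhi p (t • A) * V).mulVec e1 i := rfl
      rw [hL, hR]
      ring
    have hs1 := matPhi_smul_hasSum p t H (leftMulLM V e1 i)
    have hs2 := matPhi_smul_hasSum p t A (rightMulLM V e1 i)
    have hs12 := hs1.sub hs2
    have hterm : (fun k : ℕ =>
        (t:ℂ)^k * ((k+p).factorial : ℂ)⁻¹ * (leftMulLM V e1 i) (H^k)
          - (t:ℂ)^k * ((k+p).factorial : ℂ)⁻¹ * (rightMulLM V e1 i) (A^k))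
        = fun k : ℕ => -(h:ℂ) * ∑ j ∈ Finset.range k,
            (t:ℂ)^k * ((k+p).factorial : ℂ)⁻¹ * wv (k-1-j) i * c j := by
      funext k
      have hlm : (leftMulLM V e1 i) (H^k) = ((V * H^k).mulVec e1) i := rfl
      have hrm : (rightMulLM V e1 i) (A^k) = ((A^k * V).mulVec e1) i := rfl
      rw [hlm, hrm, ← mul_sub]
      have hdiff : ((V * H^k).mulVec e1) i - ((A^k * V).mulVec e1) i
          = -(((A^k * V - V * H^k)).mulVec e1 i) := by
        rw [Matrix.sub_mulVec]
        simp
      rw [hdiff, telescope A V H k, h_arn]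
      have hsum2 : (((∑ j ∈ Finset.range k,
            A ^ (k-1-j) * ((h:ℂ) • Matrix.vecMulVec vnext eL) * H ^ j)).mulVec e1) i
          = ∑ j ∈ Finset.range k, (h:ℂ) * (c j * wv (k-1-j) i) := by
      
        have heval : (((∑ j ∈ Finset.range k,
              A ^ (k-1-j) * ((h:ℂ) • Matrix.vecMulVec vnext eL) * H ^ j)).mulVec e1) i
            = (evalLM e1 i) (∑ j ∈ Finset.range k,
              A ^ (k-1-j) * ((h:ℂ) • Matrix.vecMulVec vnext eL) * H ^ j) := rfl
        rw [heval, map_sum]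
        refine Finset.sum_congr rfl fun j hj => ?_
        have hsm : A ^ (k-1-j) * ((h:ℂ) • Matrix.vecMulVec vnext eL) * H ^ j
            = (h:ℂ) • (A ^ (k-1-j) * Matrix.vecMulVec vnext eL * H ^ j) := by
          rw [Matrix.mul_smul, Matrix.smul_mul]
        rw [hsm, LinearMap.map_smul, smul_eq_mul]
        congr 1
        have hev2 : (evalLM e1 i) (A ^ (k-1-j) * Matrix.vecMulVec vnext eL * H ^ j)
            = ((A ^ (k-1-j) * Matrix.vecMulVec vnext eL * H ^ j).mulVec e1) i := rfl
        rw [hev2, sandwich]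
        congr 1
        rw [heL, single_dotProduct, one_mul, mulVec_single_entry]
      rw [hsum2]
      simp only [mul_neg, neg_mul, Finset.mul_sum, ← Finset.sum_neg_distrib]
      exact Finset.sum_congr rfl fun j hj => by ring
    rw [hterm] at hs12
    have htval : l p t i = (β:ℂ) * ∑' k : ℕ, -(h:ℂ) * ∑ j ∈ Finset.range k,
        (t:ℂ)^k * ((k+p).factorial : ℂ)⁻¹ * wv (k-1-j) i * c j := by
      rw [hsplit, hs12.tsum_eq]
    rw [htval, tsum_mul_left]
    have htri := tsum_triangle
      (fun a j => (t:ℂ) ^ (a + j + 1) * (((a + j + 1 + p).factorial : ℂ))⁻¹ * wv a i * c j)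
      (hFsum i)
    have htri2 : ∑' q : ℕ × ℕ,
        (t:ℂ) ^ (q.1 + q.2 + 1) * (((q.1 + q.2 + 1 + p).factorial : ℂ))⁻¹ * wv q.1 i * c q.2
        = ∑' k : ℕ, ∑ j ∈ Finset.range k,
            (t:ℂ)^k * ((k+p).factorial : ℂ)⁻¹ * wv (k-1-j) i * c j := by
      rw [htri]
      refine tsum_congr fun k => Finset.sum_congr rfl fun j hj => ?_
      rw [Finset.mem_range] at hj
      simp only [show k - 1 - j + j + 1 = k from by omega,
        show k - 1 - j + j + 1 + p = k + p from by omega]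
    rw [← htri2]
    ring
  -- the defect as a series
  have hδser : ∀ s : ℝ, δ p s
      = ∑' j : ℕ, (β:ℂ) * (s:ℂ) ^ (j + p) * (((j + p).factorial : ℂ))⁻¹ * c j := by
    intro s
    rw [hδ]
    have h1 : (matPhi p (s • H)) (Fin.last m) 0 = ((matPhi p (s • H)).mulVec e1) (Fin.last m) :=
      (mulVec_single_entry _ _ _).symm
    rw [h1, matPhi_smul_mulVec, ← tsum_mul_left]
    refine tsum_congr fun j => ?_
    have h2 : (H ^ j).mulVec e1 (Fin.last m) = c j := mulVec_single_entry _ _ _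
    rw [h2, pow_add]
    ring
  -- coordinates of the exponential
  have hEcoord : ∀ (s : ℝ) (i : Fin n), (exp ((t - s) • fA) w') i
      = ∑' a : ℕ, ((t:ℂ) - (s:ℂ)) ^ a * ((a.factorial : ℂ))⁻¹ * wv a i := by
    intro s i
    rw [hfA, hw', exp_coord A (t - s) vnext i]
    refine tsum_congr fun a => ?_
    push_cast
    rfl
  -- the integral identity
  have hIntegral : ∀ i : Fin n, (∫ s in (0:ℝ)..t, ((exp ((t - s) • fA) w') i * δ p s))
      = (β:ℂ) * ∑' q : ℕ × ℕ,
        (t:ℂ) ^ (q.1 + q.2 + p + 1) * (((q.1 + q.2 + p + 1).factorial : ℂ))⁻¹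
          * wv q.1 i * c q.2 := by
    intro i
    set R : ℕ × ℕ → ℝ → ℂ := fun q s =>
      (((t:ℂ) - (s:ℂ)) ^ q.1 * ((q.1.factorial : ℂ))⁻¹ * wv q.1 i)
        * ((β:ℂ) * (s:ℂ) ^ (q.2 + p) * (((q.2 + p).factorial : ℂ))⁻¹ * c q.2) with hR
    have habs_sub : ∀ s : ℝ, ‖(t:ℂ) - (s:ℂ)‖ = |t - s| := by
      intro s
      rw [show (t:ℂ) - (s:ℂ) = ((t - s : ℝ) : ℂ) by push_cast; ring, Complex.norm_real, Real.norm_eq_abs]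
    have hPsum : ∀ s : ℝ, Summable (fun a : ℕ =>
        ‖((t:ℂ) - (s:ℂ)) ^ a * ((a.factorial : ℂ))⁻¹ * wv a i‖) := by
      intro s
      refine Summable.of_nonneg_of_le (fun a => norm_nonneg _) (fun a => ?_)
        ((Real.summable_pow_div_factorial ((|t| + |s|) * CA)).mul_right K)
      have habs : ‖(t:ℂ) - (s:ℂ)‖ ≤ |t| + |s| := by
        rw [habs_sub s, sub_eq_add_neg]
        exact (abs_add_le t (-s)).trans (by rw [abs_neg])
      have hn : ‖((t:ℂ) - (s:ℂ)) ^ a * ((a.factorial : ℂ))⁻¹ * wv a i‖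
          = ‖(t:ℂ) - (s:ℂ)‖ ^ a * ((a.factorial : ℝ))⁻¹ * ‖wv a i‖ := by
        simp [norm_mul, map_mul, map_pow, map_inv₀, Complex.norm_natCast]
      rw [hn]
      calc ‖(t:ℂ) - (s:ℂ)‖ ^ a * ((a.factorial : ℝ))⁻¹ * ‖wv a i‖
          ≤ (|t| + |s|) ^ a * ((a.factorial : ℝ))⁻¹ * (CA ^ a * K) := by
            have h1 : ‖(t:ℂ) - (s:ℂ)‖ ^ a ≤ (|t| + |s|) ^ a :=
              pow_le_pow_left₀ (norm_nonneg _) habs a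
            have := mul_le_mul_of_nonneg_right h1 (by positivity :
              (0:ℝ) ≤ ((a.factorial : ℝ))⁻¹)
            exact mul_le_mul this (hwb a i) (norm_nonneg _) (by positivity)
        _ = ((|t| + |s|) * CA) ^ a / a.factorial * K := by
            rw [mul_pow]
            ring
    have hQsum : ∀ s : ℝ, Summable (fun j : ℕ =>
        ‖(β:ℂ) * (s:ℂ) ^ (j + p) * (((j + p).factorial : ℂ))⁻¹ * c j‖) := by
      intro s
      refine Summable.of_nonneg_of_le (fun j => norm_nonneg _) (fun j => ?_)
        ((Real.summable_pow_div_factorial (|s| * CH)).mul_left (β * |s| ^ p))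
      have hn : ‖(β:ℂ) * (s:ℂ) ^ (j + p) * (((j + p).factorial : ℂ))⁻¹ * c j‖
          = β * |s| ^ (j + p) * (((j + p).factorial : ℝ))⁻¹ * ‖c j‖ := by
        simp [norm_mul, map_mul, map_pow, map_inv₀,
          Complex.norm_natCast, Complex.norm_real, abs_of_nonneg hβ]
      rw [hn]
      have hfj : (j.factorial : ℝ) ≤ ((j + p).factorial : ℝ) := by
        exact_mod_cast Nat.factorial_le (Nat.le_add_right j p)
      calc β * |s| ^ (j + p) * (((j + p).factorial : ℝ))⁻¹ * ‖c j‖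
          ≤ β * |s| ^ (j + p) * ((j.factorial : ℝ))⁻¹ * CH ^ j := by
            have h2 : (((j + p).factorial : ℝ))⁻¹ ≤ ((j.factorial : ℝ))⁻¹ :=
              inv_anti₀ (by positivity) hfj
            have := mul_le_mul_of_nonneg_left h2 (by positivity : (0:ℝ) ≤ β * |s| ^ (j + p))
            exact mul_le_mul this (hcb j) (norm_nonneg _) (by positivity)
        _ = β * |s| ^ p * ((|s| * CH) ^ j / j.factorial) := by
            rw [pow_add, mul_pow]
            ring
    have hprod : ∀ s : ℝ, (exp ((t - s) • fA) w') i * δ p s = ∑' q : ℕ × ℕ, R q s := by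
      intro s
      rw [hEcoord s i, hδser s]
      exact tsum_mul_tsum_of_summable_norm (hPsum s) (hQsum s)
    have hmeas : ∀ q : ℕ × ℕ, AEStronglyMeasurable (fun s : ℝ => R q s)
        (volume.restrict (Set.Ioc (0:ℝ) t)) := by
      intro q
      have hc1 : Continuous (fun s : ℝ => ((t:ℂ) - (s:ℂ))) :=
        continuous_const.sub Complex.continuous_ofReal
      exact ((((hc1.pow q.1).mul continuous_const).mul continuous_const).mul
        (((continuous_const.mul (Complex.continuous_ofReal.pow (q.2 + p))).mul
          continuous_const).mul continuous_const)).aestronglyMeasurable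
    set D : ℕ × ℕ → ℝ := fun q => (K * (β * t ^ p)) *
      (((t * CA) ^ q.1 / q.1.factorial) * ((t * CH) ^ q.2 / q.2.factorial)) with hD_def
    have hD0 : ∀ q, 0 ≤ D q := fun q => by positivity
    have hD : Summable D := by
      refine (Summable.mul_of_nonneg (Real.summable_pow_div_factorial (t * CA))
        (Real.summable_pow_div_factorial (t * CH))
        (fun a => by positivity) (fun j => by positivity)).mul_left _
    have hb : ∀ q : ℕ × ℕ, ∀ s ∈ Set.Ioc (0:ℝ) t, ‖R q s‖ ≤ D q := by
      rintro ⟨a, j⟩ s hs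
      have hs0 : 0 < s := hs.1
      have hst : s ≤ t := hs.2
      have h1 : ‖(t:ℂ) - (s:ℂ)‖ ≤ t := by
        rw [habs_sub s, abs_of_nonneg (by linarith)]
        linarith
      have h2 : |s| ≤ t := by rw [abs_of_pos hs0]; exact hst
      have hn : ‖R (a, j) s‖ = (‖(t:ℂ) - (s:ℂ)‖ ^ a * ((a.factorial : ℝ))⁻¹
            * ‖wv a i‖)
          * (β * |s| ^ (j + p) * (((j + p).factorial : ℝ))⁻¹ * ‖c j‖) := by
        simp [hR, norm_mul, map_mul, map_pow, map_inv₀,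
          Complex.norm_natCast, Complex.norm_real, abs_of_nonneg hβ]
        try ring
      rw [hn]
      have hfj : (j.factorial : ℝ) ≤ ((j + p).factorial : ℝ) := by
        exact_mod_cast Nat.factorial_le (Nat.le_add_right j p)
      have hA : ‖(t:ℂ) - (s:ℂ)‖ ^ a * ((a.factorial : ℝ))⁻¹
            * ‖wv a i‖ ≤ t ^ a * ((a.factorial : ℝ))⁻¹ * (CA ^ a * K) := by
        have hp1 : ‖(t:ℂ) - (s:ℂ)‖ ^ a ≤ t ^ a :=
          pow_le_pow_left₀ (norm_nonneg _) h1 a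
        have := mul_le_mul_of_nonneg_right hp1 (by positivity : (0:ℝ) ≤ ((a.factorial : ℝ))⁻¹)
        exact mul_le_mul this (hwb a i) (norm_nonneg _) (by positivity)
      have hB : β * |s| ^ (j + p) * (((j + p).factorial : ℝ))⁻¹ * ‖c j‖
          ≤ β * t ^ (j + p) * ((j.factorial : ℝ))⁻¹ * CH ^ j := by
        have hp2 : |s| ^ (j + p) ≤ t ^ (j + p) := pow_le_pow_left₀ (abs_nonneg s) h2 _
        have hp3 : (((j + p).factorial : ℝ))⁻¹ ≤ ((j.factorial : ℝ))⁻¹ :=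
          inv_anti₀ (by positivity) hfj
        have h4 := mul_le_mul (mul_le_mul_of_nonneg_left hp2 hβ) hp3 (by positivity)
          (by positivity)
        exact mul_le_mul h4 (hcb j) (norm_nonneg _) (by positivity)
      calc _ ≤ (t ^ a * ((a.factorial : ℝ))⁻¹ * (CA ^ a * K))
            * (β * t ^ (j + p) * ((j.factorial : ℝ))⁻¹ * CH ^ j) :=
          mul_le_mul hA hB (by positivity) (by positivity)
        _ = D (a, j) := by
            rw [hD_def]
            simp only
            rw [pow_add, mul_pow, mul_pow]
            field_simp
    have hlint : ∑' q : ℕ × ℕ, ∫⁻ s in Set.Ioc (0:ℝ) t, ‖R q s‖ₑ ∂volume ≠ ⊤ := by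
      have hle1 : ∀ q : ℕ × ℕ, (∫⁻ s in Set.Ioc (0:ℝ) t, ‖R q s‖ₑ ∂volume)
          ≤ ENNReal.ofReal (D q * t) := by
        intro q
        calc (∫⁻ s in Set.Ioc (0:ℝ) t, ‖R q s‖ₑ ∂volume)
            ≤ ∫⁻ _ in Set.Ioc (0:ℝ) t, ENNReal.ofReal (D q) ∂volume := by
              refine setLIntegral_mono measurable_const fun s hs => ?_
              rw [← ofReal_norm]
              exact ENNReal.ofReal_le_ofReal (hb q s hs)
          _ = ENNReal.ofReal (D q) * volume (Set.Ioc (0:ℝ) t) := setLIntegral_const _ _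
          _ = ENNReal.ofReal (D q) * ENNReal.ofReal t := by
              rw [Real.volume_Ioc, sub_zero]
          _ = ENNReal.ofReal (D q * t) := by
              rw [ENNReal.ofReal_mul (hD0 q)]
      have hle2 : ∑' q : ℕ × ℕ, ∫⁻ s in Set.Ioc (0:ℝ) t, ‖R q s‖ₑ ∂volume
          ≤ ∑' q : ℕ × ℕ, ENNReal.ofReal (D q * t) := ENNReal.tsum_le_tsum hle1
      have heq : ∑' q : ℕ × ℕ, ENNReal.ofReal (D q * t)
          = ENNReal.ofReal (∑' q : ℕ × ℕ, D q * t) :=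
        (ENNReal.ofReal_tsum_of_nonneg (fun q => by positivity) (hD.mul_right t)).symm
      rw [heq] at hle2
      exact ne_top_of_le_ne_top ENNReal.ofReal_ne_top hle2
    have hswap : (∫ s in Set.Ioc (0:ℝ) t, (∑' q : ℕ × ℕ, R q s))
        = ∑' q : ℕ × ℕ, ∫ s in Set.Ioc (0:ℝ) t, R q s := integral_tsum hmeas hlint
    have hterm : ∀ q : ℕ × ℕ, (∫ s in Set.Ioc (0:ℝ) t, R q s)
        = (β:ℂ) * ((t:ℂ) ^ (q.1 + q.2 + p + 1) * (((q.1 + q.2 + p + 1).factorial : ℂ))⁻¹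
            * wv q.1 i * c q.2) := by
      rintro ⟨a, j⟩
      rw [← intervalIntegral.integral_of_le ht.le]
      have hfold : (fun s : ℝ => R (a, j) s)
          = fun s : ℝ => ((a.factorial : ℂ)⁻¹ * wv a i * (β:ℂ)
              * (((j + p).factorial : ℂ))⁻¹ * c j)
            * ((s:ℂ) ^ (j + p) * (((t:ℝ):ℂ) - (s:ℂ)) ^ a) := by
        funext s
        simp only [hR]
        ring
      rw [hfold, intervalIntegral.integral_const_mul, beta_nat a (j + p) ht]
      have hidx : a + (j + p) + 1 = a + j + p + 1 := by omega
      rw [hidx]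
      have hfa : (a.factorial : ℂ) ≠ 0 := Nat.cast_ne_zero.mpr (Nat.factorial_ne_zero _)
      have hfj : ((j + p).factorial : ℂ) ≠ 0 := Nat.cast_ne_zero.mpr (Nat.factorial_ne_zero _)
      have hfs : ((a + j + p + 1).factorial : ℂ) ≠ 0 :=
        Nat.cast_ne_zero.mpr (Nat.factorial_ne_zero _)
      field_simp
    have hrw : (fun s : ℝ => (exp ((t - s) • fA) w') i * δ p s)
        = fun s : ℝ => ∑' q : ℕ × ℕ, R q s := funext hprod
    rw [intervalIntegral.integral_of_le ht.le, hrw, hswap]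
    rw [tsum_congr hterm, tsum_mul_left]
  -- coordinatewise integral representation of the error
  have hcoord : ∀ i : Fin n, l p t i
      = (-(h / t ^ p) : ℝ) • ∫ s in (0:ℝ)..t, ((exp ((t - s) • fA) w') i * δ p s) := by
    intro i
    rw [hkey i, hIntegral i, Complex.real_smul]
    have hGF : ∀ q : ℕ × ℕ, (t:ℂ) ^ (q.1 + q.2 + p + 1)
          * (((q.1 + q.2 + p + 1).factorial : ℂ))⁻¹ * wv q.1 i * c q.2
        = (t:ℂ) ^ p * ((t:ℂ) ^ (q.1 + q.2 + 1)
          * (((q.1 + q.2 + 1 + p).factorial : ℂ))⁻¹ * wv q.1 i * c q.2) := by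
      intro q
      rw [show q.1 + q.2 + p + 1 = q.1 + q.2 + 1 + p from by omega, pow_add]
      ring
    rw [tsum_congr hGF, tsum_mul_left]
    have htp : ((t:ℂ)) ^ p ≠ 0 := pow_ne_zero _ (by exact_mod_cast ht.ne')
    push_cast
    field_simp
  -- continuity facts
  have hδcont : ContinuousOn (fun s : ℝ => δ p s) (Set.uIcc 0 t) := by
    have huicc : Set.uIcc (0:ℝ) t = Set.Icc 0 t := Set.uIcc_of_le ht.le
    have hg0 : ContinuousOn (fun s : ℝ =>
        ∑' j : ℕ, (s:ℂ) ^ j * (((j + p).factorial : ℂ))⁻¹ * c j) (Set.uIcc 0 t) := by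
      refine continuousOn_tsum (u := fun j => (t * CH) ^ j / j.factorial)
        (fun j => Continuous.continuousOn (by continuity))
        (Real.summable_pow_div_factorial (t * CH)) ?_
      intro j s hs
      rw [huicc] at hs
      have hs1 : |s| ≤ t := by
        rw [abs_of_nonneg hs.1]; exact hs.2
      have : ‖(s:ℂ) ^ j * (((j + p).factorial : ℂ))⁻¹ * c j‖
          = |s| ^ j * (((j + p).factorial : ℝ))⁻¹ * ‖c j‖ := by
        simp [norm_mul, map_mul, map_pow, map_inv₀,
          Complex.norm_real, Complex.norm_natCast]
      rw [this]
      have hfj : (j.factorial : ℝ) ≤ ((j + p).factorial : ℝ) := by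
        exact_mod_cast Nat.factorial_le (Nat.le_add_right j p)
      calc |s| ^ j * (((j + p).factorial : ℝ))⁻¹ * ‖c j‖
          ≤ t ^ j * ((j.factorial : ℝ))⁻¹ * CH ^ j := by
            have h1 : |s| ^ j ≤ t ^ j := pow_le_pow_left₀ (abs_nonneg s) hs1 j
            have h2 : (((j + p).factorial : ℝ))⁻¹ ≤ ((j.factorial : ℝ))⁻¹ :=
              inv_anti₀ (by positivity) hfj
            have h3 := hcb j
            have := mul_le_mul h1 h2 (by positivity) (by positivity)
            exact mul_le_mul this h3 (norm_nonneg _) (by positivity)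
        _ = (t * CH) ^ j / j.factorial := by
            rw [mul_pow]
            ring
    have hδeq : ∀ s : ℝ, δ p s = (β:ℂ) * (s:ℂ) ^ p *
        ∑' j : ℕ, (s:ℂ) ^ j * (((j + p).factorial : ℂ))⁻¹ * c j := by
      intro s
      rw [hδ]
      congr 1
      rw [show (matPhi p (s • H)) (Fin.last m) 0
          = ((matPhi p (s • H)).mulVec e1) (Fin.last m) from (mulVec_single_entry _ _ _).symm,
        matPhi_smul_mulVec]
      exact tsum_congr fun j => by rw [mulVec_single_entry]
    have : (fun s : ℝ => δ p s) = fun s : ℝ => (β:ℂ) * (s:ℂ) ^ p *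
        ∑' j : ℕ, (s:ℂ) ^ j * (((j + p).factorial : ℂ))⁻¹ * c j := funext hδeq
    rw [this]
    exact (Continuous.continuousOn (by continuity)).mul hg0
  have hEcont : Continuous (fun s : ℝ => exp ((t - s) • fA) w') := by
    have h1 := exp_apply_continuous A w'
    exact h1.comp (continuous_const.sub continuous_id)
  -- the vector-valued integrand
  set Ψ : ℝ → EuclideanSpace ℂ (Fin n) := fun s => (δ p s) • (exp ((t - s) • fA) w') with hΨ
  have hΨcont : ContinuousOn Ψ (Set.uIcc 0 t) := hδcont.smul hEcont.continuousOn
  have hΨint : IntervalIntegrable Ψ volume 0 t := hΨcont.intervalIntegrable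
  -- vector-valued integral representation
  have hvec : (WithLp.equiv 2 (Fin n → ℂ)).symm (l p t)
      = (-(h / t ^ p) : ℝ) • ∫ s in (0:ℝ)..t, Ψ s := by
    have hcoords : ∀ i : Fin n, ((∫ s in (0:ℝ)..t, Ψ s) : EuclideanSpace ℂ (Fin n)) i
        = ∫ s in (0:ℝ)..t, ((exp ((t - s) • fA) w') i * δ p s) := by
      intro i
      have h1 : ((∫ s in (0:ℝ)..t, Ψ s) : EuclideanSpace ℂ (Fin n)) i
          = EuclideanSpace.proj (𝕜 := ℂ) i (∫ s in (0:ℝ)..t, Ψ s) := rfl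
      rw [h1, ← (EuclideanSpace.proj (𝕜 := ℂ) i).intervalIntegral_comp_comm hΨint]
      refine intervalIntegral.integral_congr fun s _ => ?_
      show (Ψ s) i = _
      show (δ p s) * ((exp ((t - s) • fA) w') i) = _
      ring
    ext i
    show l p t i = ((-(h / t ^ p) : ℝ) • (∫ s in (0:ℝ)..t, Ψ s) : EuclideanSpace ℂ (Fin n)) i
    show l p t i = (-(h / t ^ p) : ℝ) • (((∫ s in (0:ℝ)..t, Ψ s) : EuclideanSpace ℂ (Fin n)) i)
    rw [hcoords i]
    exact hcoord i
  -- final estimate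
  have hnorm1 : vnorm (l p t) = |h / t ^ p| * ‖∫ s in (0:ℝ)..t, Ψ s‖ := by
    rw [vnorm_eq_norm, hvec, norm_smul, Real.norm_eq_abs, abs_neg]
  have habs : |h / t ^ p| = h / t ^ p := abs_of_pos (by positivity)
  have hbound1 : ‖∫ s in (0:ℝ)..t, Ψ s‖ ≤ ∫ s in (0:ℝ)..t, ‖Ψ s‖ :=
    intervalIntegral.norm_integral_le_integral_norm ht.le
  have hbound2 : (∫ s in (0:ℝ)..t, ‖Ψ s‖) ≤ ∫ s in (0:ℝ)..t, ‖δ p s‖ := by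
    refine intervalIntegral.integral_mono_on ht.le hΨint.norm ?_ ?_
    · exact (hδcont.norm).intervalIntegrable
    · intro s hs
      have hτ : (0:ℝ) ≤ t - s := by linarith [hs.2]
      have hcontr := exp_contraction A hdiss (t - s) hτ w'
      have hw1 : ‖w'‖ ≤ 1 := by rw [hw', ← vnorm_eq_norm]; exact hvnext
      calc ‖Ψ s‖ = ‖δ p s‖ * ‖exp ((t - s) • fA) w'‖ := norm_smul _ _
        _ ≤ ‖δ p s‖ * 1 := by
            refine mul_le_mul_of_nonneg_left (hcontr.trans hw1) (norm_nonneg _)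
        _ = ‖δ p s‖ := by rw [mul_one]
  calc vnorm (l p t) = |h / t ^ p| * ‖∫ s in (0:ℝ)..t, Ψ s‖ := hnorm1
    _ ≤ |h / t ^ p| * ∫ s in (0:ℝ)..t, ‖Ψ s‖ :=
        mul_le_mul_of_nonneg_left hbound1 (abs_nonneg _)
    _ ≤ |h / t ^ p| * ∫ s in (0:ℝ)..t, ‖δ p s‖ :=
        mul_le_mul_of_nonneg_left hbound2 (abs_nonneg _)
    _ = (h / t ^ p) * ∫ s in (0:ℝ)..t, ‖δ p s‖ := by rw [habs]
end

section
/- Let H ∈ ℂ^{m×m}, p ∈ ℕ with p ≥ 1, and t ∈ ℝ. Define the (m+p)×(m+p) block matrix H̃ = [[H, 0_{m×p}], [e_1 e_m^*, J]], where J ∈ ℂ^{p×p} has ones on its first subdiagonal and zeros elsewhere. Then t^p · e_m^* φ_p(t H) e_1 = e_{m+p}^* exp(t H̃) e_1. -/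
open MeasureTheory

attribute [local instance] Matrix.linftyOpNormedRing

set_option maxHeartbeats 1000000 in
private lemma entrySummable' {N : Type*} [Fintype N] [DecidableEq N] (q : ℕ) (M : Matrix N N ℂ)
    (i j : N) : Summable fun k : ℕ => ((k + q).factorial : ℂ)⁻¹ * (M ^ k) i j := by
  set C : ℝ := max 1 ‖M‖ with hC
  have hC1 : (1:ℝ) ≤ C := le_max_left _ _
  have hent : ∀ k : ℕ, ‖(M ^ k) i j‖ ≤ C ^ k := by
    intro k
    cases k with
    | zero =>
      simp only [pow_zero, Matrix.one_apply]
      split <;> simp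
    | succ n =>
      have hent1 : ∀ (A : Matrix N N ℂ), ‖A i j‖ ≤ ‖A‖ := by
        intro A
        have h := Matrix.linfty_opNNNorm_def A
        have h2 : ‖A i j‖₊ ≤ ∑ j', ‖A i j'‖₊ :=
          Finset.single_le_sum (f := fun j' => ‖A i j'‖₊) (fun _ _ => zero_le)
            (Finset.mem_univ j)
        have h3 : (∑ j', ‖A i j'‖₊) ≤ ‖A‖₊ :=
          h ▸ Finset.le_sup (f := fun i => ∑ j : N, ‖A i j‖₊) (Finset.mem_univ i)
        exact_mod_cast h2.trans h3
      calc ‖(M ^ (n+1)) i j‖ ≤ ‖M ^ (n+1)‖ := hent1 _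
        _ ≤ ‖M‖ ^ (n+1) := norm_pow_le' M n.succ_pos
        _ ≤ C ^ (n+1) := pow_le_pow_left₀ (norm_nonneg _) (le_max_right _ _) _
  apply Summable.of_norm_bounded (g := fun k => C ^ k / k.factorial)
    (Real.summable_pow_div_factorial C)
  intro k
  rw [norm_mul]
  have h1 : ‖((k + q).factorial : ℂ)⁻¹‖ ≤ ((k.factorial : ℝ))⁻¹ := by
    rw [norm_inv, Complex.norm_natCast]
    apply inv_anti₀
    · positivity
    · exact_mod_cast Nat.factorial_le (Nat.le_add_right k q)
  calc ‖((k + q).factorial : ℂ)⁻¹‖ * ‖(M ^ k) i j‖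
      ≤ ((k.factorial : ℝ))⁻¹ * C ^ k := by
        apply mul_le_mul h1 (hent k) (norm_nonneg _) (by positivity)
    _ = C ^ k / k.factorial := by ring

private lemma matPhi_apply' {N : Type*} [Fintype N] [DecidableEq N] (q : ℕ) (M : Matrix N N ℂ)
    (i j : N) :
    (matPhi q M) i j = ∑' k : ℕ, ((k + q).factorial : ℂ)⁻¹ * (M ^ k) i j := by
  have h1 : ∀ i j, Summable fun k : ℕ => ((k + q).factorial : ℂ)⁻¹ * (M ^ k) i j :=
    entrySummable' q M
  have hs : Summable fun k : ℕ => ((k + q).factorial : ℂ)⁻¹ • M ^ k := by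
    apply Pi.summable.mpr; intro i'
    apply Pi.summable.mpr; intro j'
    simpa [Matrix.smul_apply, smul_eq_mul] using h1 i' j'
  rw [matPhi]
  erw [tsum_apply hs, tsum_apply]
  · simp [Matrix.smul_apply, smul_eq_mul]
  · apply Pi.summable.mpr; intro j'
    simpa [Matrix.smul_apply, smul_eq_mul] using h1 i j'

private theorem keyCol (m p : ℕ) (hp : 1 ≤ p)
    (H : Matrix (Fin (m + 1)) (Fin (m + 1)) ℂ)
    (Ht : Matrix (Fin (m + 1 + p)) (Fin (m + 1 + p)) ℂ)
    (hHt : ∀ i j : Fin (m + 1 + p), Ht i j =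
      if hi : (i : ℕ) < m + 1 then
        (if hj : (j : ℕ) < m + 1 then H ⟨i, hi⟩ ⟨j, hj⟩ else 0)
      else
        (if (i : ℕ) = m + 1 ∧ (j : ℕ) = m then 1
         else if (i : ℕ) = (j : ℕ) + 1 ∧ m + 1 ≤ (j : ℕ) then 1 else 0)) :
    ∀ k : ℕ, ∀ i : Fin (m + 1 + p),
      (Ht ^ k) i ⟨0, by have := hp; omega⟩ =
        if hi : (i : ℕ) < m + 1 then (H ^ k) ⟨i, hi⟩ ⟨0, by omega⟩
        else if (i : ℕ) < m + 1 + k then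
          (H ^ (k - ((i : ℕ) - m))) (Fin.last m) ⟨0, by omega⟩ else 0 := by
  intro k
  induction k with
  | zero =>
    intro i
    by_cases hi : (i : ℕ) < m + 1
    · rw [pow_zero, pow_zero, dif_pos hi, Matrix.one_apply, Matrix.one_apply]
      by_cases h0 : (i : ℕ) = 0
      · rw [if_pos (show i = (⟨0, by omega⟩ : Fin (m + 1 + p)) from Fin.ext h0),
            if_pos (show (⟨(i : ℕ), hi⟩ : Fin (m + 1)) = ⟨0, by omega⟩ from Fin.ext h0)]
      · rw [if_neg (show ¬ i = (⟨0, by omega⟩ : Fin (m + 1 + p)) from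
              fun h => h0 (congrArg Fin.val h)),
            if_neg (show ¬ (⟨(i : ℕ), hi⟩ : Fin (m + 1)) = ⟨0, by omega⟩ from
              fun h => h0 (congrArg Fin.val h))]
    · rw [pow_zero, dif_neg hi, Matrix.one_apply,
          if_neg (show ¬ i = (⟨0, by omega⟩ : Fin (m + 1 + p)) from fun h => by
            have : (i : ℕ) = 0 := congrArg Fin.val h
            omega),
          if_neg (by omega)]
  | succ k ih =>
    intro i
    rw [pow_succ', Matrix.mul_apply]
    by_cases hi : (i : ℕ) < m + 1
    · rw [dif_pos hi]
      have hmain : ∑ j, Ht i j * (Ht ^ k) j ⟨0, by omega⟩ =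
          ∑ j : Fin (m + 1), H ⟨i, hi⟩ j * (H ^ k) j ⟨0, by omega⟩ := by
        rw [Fin.sum_univ_add (f := fun j : Fin (m + 1 + p) =>
          Ht i j * (Ht ^ k) j ⟨0, by omega⟩)]
        have hz : ∀ x : Fin p,
            Ht i (Fin.natAdd (m + 1) x) * (Ht ^ k) (Fin.natAdd (m + 1) x) ⟨0, by omega⟩ = 0 := by
          intro x
          have h0 : Ht i (Fin.natAdd (m + 1) x) = 0 := by
            rw [hHt, dif_pos hi, dif_neg (by simp; omega)]
          rw [h0, zero_mul]
        rw [Finset.sum_congr rfl (fun x _ => hz x), Finset.sum_const_zero, add_zero]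
        apply Finset.sum_congr rfl
        intro j _
        have hcl : ((Fin.castAdd p j : Fin (m + 1 + p)) : ℕ) < m + 1 := by simp; omega
        rw [hHt, dif_pos hi, dif_pos hcl, ih, dif_pos hcl]
        have hj : (⟨((Fin.castAdd p j : Fin (m + 1 + p)) : ℕ), hcl⟩ : Fin (m + 1)) = j :=
          Fin.ext (by simp)
        rw [hj]
      rw [hmain, pow_succ', Matrix.mul_apply]
    · rw [dif_neg hi]
      push_neg at hi
      have hi1 : 1 ≤ (i : ℕ) := by omega
      set j0 : Fin (m + 1 + p) := ⟨(i : ℕ) - 1, by omega⟩ with hj0def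
      have hval : (j0 : ℕ) = (i : ℕ) - 1 := rfl
      have h1 : ∀ j ∈ Finset.univ, j ≠ j0 → Ht i j * (Ht ^ k) j ⟨0, by omega⟩ = 0 := by
        intro j _ hne
        have hvne : (j : ℕ) ≠ (i : ℕ) - 1 := fun h => hne (Fin.ext (h.trans hval.symm))
        rw [hHt, dif_neg (by omega), if_neg (by omega), if_neg (by omega), zero_mul]
      have h2 : Ht i j0 = 1 := by
        rw [hHt, dif_neg (by omega)]
        by_cases he : (i : ℕ) = m + 1
        · rw [if_pos ⟨he, by omega⟩]
        · rw [if_neg (by omega), if_pos ⟨by omega, by omega⟩]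
      rw [Finset.sum_eq_single_of_mem j0 (Finset.mem_univ j0) h1, h2, one_mul, ih j0]
      by_cases he : (i : ℕ) = m + 1
      · have hj0lt : (j0 : ℕ) < m + 1 := by omega
        rw [dif_pos hj0lt, if_pos (by omega)]
        have he1 : k + 1 - ((i : ℕ) - m) = k := by omega
        have he2 : (⟨(j0 : ℕ), hj0lt⟩ : Fin (m + 1)) = Fin.last m := by
          apply Fin.ext; simp only [Fin.val_last]; omega
        rw [he1, he2]
      · rw [dif_neg (by omega)]
        by_cases hlt : (i : ℕ) < m + 1 + (k + 1)
        · rw [if_pos (by omega), if_pos hlt]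
          have : k - ((j0 : ℕ) - m) = k + 1 - ((i : ℕ) - m) := by omega
          rw [this]
        · rw [if_neg (by omega), if_neg hlt]


/-- `t^p ⋅ e_{m+1}^* φ_p(tH) e_1 = e_{m+1+p}^* exp(t H̃) e_1`, where
`H̃ = [[H, 0], [e_1 e_{m+1}^*, J]]` and `J` has ones on its first subdiagonal. -/
theorem statement5 (m p : ℕ) (hp : 1 ≤ p)
    (H : Matrix (Fin (m + 1)) (Fin (m + 1)) ℂ) (t : ℝ)
    (Ht : Matrix (Fin (m + 1 + p)) (Fin (m + 1 + p)) ℂ)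
    (hHt : ∀ i j : Fin (m + 1 + p), Ht i j =
      if hi : (i : ℕ) < m + 1 then
        (if hj : (j : ℕ) < m + 1 then H ⟨i, hi⟩ ⟨j, hj⟩ else 0)
      else
        (if (i : ℕ) = m + 1 ∧ (j : ℕ) = m then 1
         else if (i : ℕ) = (j : ℕ) + 1 ∧ m + 1 ≤ (j : ℕ) then 1 else 0)) :
    (t : ℂ) ^ p * (matPhi p (t • H)) (Fin.last m) 0 =
      (matPhi 0 (t • Ht)) ⟨m + p, by omega⟩ ⟨0, by omega⟩ := by
  have key := keyCol m p hp H Ht hHt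
  rw [matPhi_apply' p (t • H), matPhi_apply' 0 (t • Ht)]
  have hI : (m + p : ℕ) < m + 1 + p := by omega
  have hiv : ((⟨m + p, hI⟩ : Fin (m + 1 + p)) : ℕ) = m + p := rfl
  have h00 : (⟨0, by omega⟩ : Fin (m + 1)) = 0 := Fin.ext (by simp)
  -- rewrite the RHS terms using key
  have hterm : ∀ k : ℕ,
      ((k + 0).factorial : ℂ)⁻¹ * ((t • Ht) ^ k) ⟨m + p, hI⟩ ⟨0, by omega⟩ =
        (k.factorial : ℂ)⁻¹ * (t : ℂ) ^ k *
          (if p ≤ k then (H ^ (k - p)) (Fin.last m) 0 else 0) := by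
    intro k
    rw [smul_pow, Matrix.smul_apply, key k ⟨m + p, hI⟩]
    rw [dif_neg (by simp [hiv]; omega)]
    have hred : (m + p) - m = p := by omega
    by_cases hc : p ≤ k
    · rw [if_pos (show ((⟨m + p, hI⟩ : Fin (m + 1 + p)) : ℕ) < m + 1 + k by simp [hiv]; omega),
          if_pos hc]
      simp only [hiv, hred, Nat.add_zero, h00]
      rw [Complex.real_smul]
      push_cast
      ring
    · rw [if_neg (show ¬ ((⟨m + p, hI⟩ : Fin (m + 1 + p)) : ℕ) < m + 1 + k by
          simp [hiv]; omega), if_neg hc]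
      simp
  rw [tsum_congr hterm]
  -- shift the index by p
  have hinj : Function.Injective (fun j : ℕ => j + p) := add_left_injective p
  have hzero : ∀ x : ℕ, x ∉ Set.range (fun j : ℕ => j + p) →
      (x.factorial : ℂ)⁻¹ * (t : ℂ) ^ x *
        (if p ≤ x then (H ^ (x - p)) (Fin.last m) 0 else 0) = 0 := by
    intro x hx
    have : ¬ p ≤ x := by
      intro h
      exact hx ⟨x - p, show x - p + p = x by omega⟩
    rw [if_neg this, mul_zero]
  rw [← Function.Injective.tsum_eq hinj (fun x hx =>
    by_contra fun hr => hx (hzero x hr))]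
  rw [← tsum_mul_left]
  apply tsum_congr
  intro j
  show (t:ℂ) ^ p * (((j + p).factorial : ℂ)⁻¹ * ((t • H) ^ j) (Fin.last m) 0) = _
  simp only [if_pos (Nat.le_add_left p j), Nat.add_sub_cancel]
  rw [smul_pow, Matrix.smul_apply, Complex.real_smul]
  push_cast
  ring
end

section
/- For arbitrary nodes λ_1,…,λ_k ∈ ℂ, any p ∈ ℕ₀ and any t ≥ 0, one has ∫_0^t s^p (φ_p)_s[λ_1,…,λ_k] ds = t^{p+1} (φ_{p+1})_t[λ_1,…,λ_k]. -/
open MeasureTheory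

noncomputable def Dcoef (p k m : ℕ) : ℂ :=
  ((m + k).factorial : ℂ) / ((m.factorial : ℂ) * ((m + k + p).factorial : ℂ))

noncomputable def Dfun (p k : ℕ) (z : ℂ) : ℂ := ∑' m : ℕ, Dcoef p k m * z ^ m

lemma Dcoef_norm_le (p k m : ℕ) : ‖Dcoef p k m‖ ≤ ((m.factorial : ℝ))⁻¹ := by
  rw [Dcoef, norm_div, norm_mul]
  simp only [Complex.norm_natCast]
  rw [div_le_iff₀ (by positivity)]
  have h1 : (m + k).factorial ≤ (m + k + p).factorial :=
    Nat.factorial_le (Nat.le_add_right _ _)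
  calc ((m + k).factorial : ℝ) ≤ ((m + k + p).factorial : ℝ) := by exact_mod_cast h1
    _ = (m.factorial : ℝ)⁻¹ * ((m.factorial : ℝ) * (m + k + p).factorial) := by
        field_simp

lemma summable_D (p k : ℕ) (z : ℂ) : Summable fun m : ℕ => Dcoef p k m * z ^ m := by
  refine Summable.of_norm_bounded
    (Real.summable_pow_div_factorial ‖z‖) fun m => ?_
  show ‖Dcoef p k m * z ^ m‖ ≤ ‖z‖ ^ m / (m.factorial : ℝ)
  rw [norm_mul, norm_pow, div_eq_mul_inv, mul_comm (‖z‖ ^ m)]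
  exact mul_le_mul_of_nonneg_right (Dcoef_norm_le p k m) (by positivity)

lemma summable_aux_s7 (R : ℝ) :
    Summable (fun m : ℕ => (m : ℝ) * R ^ (m - 1) / m.factorial) := by
  apply (summable_nat_add_iff 1).mp
  have h : (fun m : ℕ => ((m + 1 : ℕ) : ℝ) * R ^ (m + 1 - 1) / (m + 1).factorial) =
      fun m : ℕ => R ^ m / m.factorial := by
    funext m
    rw [Nat.add_sub_cancel, Nat.factorial_succ]
    have hm : ((m : ℝ) + 1) ≠ 0 := by positivity
    push_cast
    rw [mul_comm ((m : ℝ) + 1) (m.factorial : ℝ), ← div_div, mul_div_assoc,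
      mul_div_cancel_left₀ _ hm]
  rw [h]
  exact Real.summable_pow_div_factorial R

lemma Dcoef_succ_mul (p k m : ℕ) : Dcoef p k (m + 1) * (((m : ℕ) + 1 : ℂ)) = Dcoef p (k + 1) m := by
  unfold Dcoef
  have h1 : m + 1 + k = m + (k + 1) := by ring
  rw [h1, Nat.factorial_succ m]
  have f1 : ((m.factorial : ℂ)) ≠ 0 := Nat.cast_ne_zero.mpr m.factorial_ne_zero
  have f2 : (((m + (k + 1) + p).factorial : ℂ)) ≠ 0 :=
    Nat.cast_ne_zero.mpr (Nat.factorial_ne_zero _)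
  have f3 : ((m : ℂ) + 1) ≠ 0 := by
    intro h
    have := congrArg Complex.re h
    simp at this
    nlinarith [this, (Nat.cast_nonneg (α := ℝ) m)]
  push_cast
  field_simp

lemma hasDerivAt_Dfun (p k : ℕ) (z : ℂ) :
    HasDerivAt (Dfun p k) (Dfun p (k + 1) z) z := by
  set R : ℝ := ‖z‖ + 1 with hRdef
  have hR : 0 < R := by positivity
  have key : HasDerivAt (fun y : ℂ => ∑' m : ℕ, Dcoef p k m * y ^ m)
      (∑' m : ℕ, Dcoef p k m * ((m : ℂ) * z ^ (m - 1))) z := by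
    refine hasDerivAt_tsum_of_isPreconnected
      (u := fun m : ℕ => (m : ℝ) * R ^ (m - 1) / m.factorial)
      (g' := fun (n : ℕ) (y : ℂ) => Dcoef p k n * ((n : ℂ) * y ^ (n - 1)))
      (y₀ := (0 : ℂ))
      (summable_aux_s7 R) (Metric.isOpen_ball (x := (0 : ℂ)) (ε := R))
      ((convex_ball (0 : ℂ) R).isPreconnected)
      (fun n y _ => (hasDerivAt_pow n y).const_mul (Dcoef p k n))
      (fun n y hy => ?_) (Metric.mem_ball_self hR) (summable_D p k 0)
      (by simp [hRdef])
    have hyR : ‖y‖ ≤ R := le_of_lt (by simpa using hy)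
    show ‖Dcoef p k n * ((n : ℂ) * y ^ (n - 1))‖ ≤ (n : ℝ) * R ^ (n - 1) / n.factorial
    rw [norm_mul, norm_mul, Complex.norm_natCast, norm_pow]
    calc ‖Dcoef p k n‖ * ((n : ℝ) * ‖y‖ ^ (n - 1)) ≤
        ((n.factorial : ℝ))⁻¹ * ((n : ℝ) * R ^ (n - 1)) := by
          refine mul_le_mul (Dcoef_norm_le p k n) ?_ (by positivity) (by positivity)
          exact mul_le_mul_of_nonneg_left (pow_le_pow_left₀ (norm_nonneg y) hyR _)
            (Nat.cast_nonneg n)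
      _ = (n : ℝ) * R ^ (n - 1) / n.factorial := by ring
  have hshift : ∑' m : ℕ, Dcoef p k m * ((m : ℂ) * z ^ (m - 1)) = Dfun p (k + 1) z := by
    have heq : (fun m : ℕ => Dcoef p k (m + 1) * (((m + 1 : ℕ) : ℂ) * z ^ (m + 1 - 1))) =
        fun m : ℕ => Dcoef p (k + 1) m * z ^ m := by
      funext m
      rw [Nat.add_sub_cancel, ← mul_assoc]
      congr 1
      rw [← Dcoef_succ_mul p k m]
      push_cast
      ring
    have hsum : Summable (fun m : ℕ => Dcoef p k m * ((m : ℂ) * z ^ (m - 1))) := by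
      apply (summable_nat_add_iff 1).mp
      simp only [heq]
      exact summable_D p (k + 1) z
    rw [Summable.tsum_eq_zero_add hsum]
    simp only [Nat.cast_zero, zero_mul, mul_zero, zero_add]
    rw [show (fun m : ℕ => Dcoef p k (m + 1) * ((((m : ℕ) + 1 : ℕ) : ℂ) * z ^ (m + 1 - 1))) =
        fun m : ℕ => Dcoef p (k + 1) m * z ^ m from heq]
    rfl
  rw [← hshift]
  exact key

lemma continuous_Dfun (p k : ℕ) : Continuous (Dfun p k) :=
  continuous_iff_continuousAt.mpr fun z => (hasDerivAt_Dfun p k z).continuousAt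

lemma Dcoef_zero (p k : ℕ) :
    Dcoef p k 0 = ((p : ℂ) + k + 1) * Dcoef (p + 1) k 0 := by
  unfold Dcoef
  simp only [Nat.zero_add, Nat.factorial_zero, Nat.cast_one, one_mul]
  have h1 : k + (p + 1) = (k + p) + 1 := by ring
  rw [h1, Nat.factorial_succ]
  have f2 : (((k + p).factorial : ℂ)) ≠ 0 := Nat.cast_ne_zero.mpr (Nat.factorial_ne_zero _)
  have f3 : ((k : ℂ) + p + 1) ≠ 0 := by
    have : ((k + p + 1 : ℕ) : ℂ) ≠ 0 := Nat.cast_ne_zero.mpr (by omega)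
    push_cast at this
    convert this using 2
  push_cast
  field_simp
  ring

lemma Dcoef_rec (p k m : ℕ) :
    Dcoef p k (m + 1) =
      ((p : ℂ) + k + 1) * Dcoef (p + 1) k (m + 1) + Dcoef (p + 1) (k + 1) m := by
  unfold Dcoef
  have h2 : m + (k + 1) = m + 1 + k := by ring
  have h1 : m + 1 + k + (p + 1) = (m + 1 + k + p) + 1 := by ring
  rw [h2, h1, Nat.factorial_succ (m + 1 + k + p), Nat.factorial_succ m]
  have f1 : ((m.factorial : ℂ)) ≠ 0 := Nat.cast_ne_zero.mpr m.factorial_ne_zero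
  have f2 : (((m + 1 + k + p).factorial : ℂ)) ≠ 0 :=
    Nat.cast_ne_zero.mpr (Nat.factorial_ne_zero _)
  have f3 : ((m : ℂ) + 1) ≠ 0 := by
    have : ((m + 1 : ℕ) : ℂ) ≠ 0 := Nat.cast_ne_zero.mpr (by omega)
    push_cast at this
    exact this
  have f4 : ((m : ℂ) + 1 + k + p + 1) ≠ 0 := by
    have : ((m + 1 + k + p + 1 : ℕ) : ℂ) ≠ 0 := Nat.cast_ne_zero.mpr (by omega)
    push_cast at this
    convert this using 2
  push_cast
  field_simp
  ring

lemma Dfun_rec (p k : ℕ) (z : ℂ) :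
    Dfun p k z = ((p : ℂ) + k + 1) * Dfun (p + 1) k z + z * Dfun (p + 1) (k + 1) z := by
  have s0 := summable_D p k z
  have s1 := summable_D (p + 1) k z
  have s2 := summable_D (p + 1) (k + 1) z
  have shift1 : Summable fun m : ℕ =>
      ((p : ℂ) + k + 1) * (Dcoef (p + 1) k (m + 1) * z ^ (m + 1)) :=
    (((summable_nat_add_iff 1).mpr s1).mul_left _)
  have hz : (fun m : ℕ => z * (Dcoef (p + 1) (k + 1) m * z ^ m)) =
      fun m : ℕ => Dcoef (p + 1) (k + 1) m * z ^ (m + 1) := by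
    funext m; ring
  have g2 : Summable fun m : ℕ => Dcoef (p + 1) (k + 1) m * z ^ (m + 1) := by
    have := s2.mul_left z
    rwa [hz] at this
  calc Dfun p k z
      = Dcoef p k 0 * z ^ 0 + ∑' m : ℕ, Dcoef p k (m + 1) * z ^ (m + 1) := by
        rw [Dfun, Summable.tsum_eq_zero_add s0]
    _ = ((p : ℂ) + k + 1) * (Dcoef (p + 1) k 0 * z ^ 0) +
        ∑' m : ℕ, (((p : ℂ) + k + 1) * (Dcoef (p + 1) k (m + 1) * z ^ (m + 1)) +
          Dcoef (p + 1) (k + 1) m * z ^ (m + 1)) := by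
        congr 1
        · rw [Dcoef_zero p k]; ring
        · exact tsum_congr fun m => by rw [Dcoef_rec p k m]; ring
    _ = ((p : ℂ) + k + 1) * (Dcoef (p + 1) k 0 * z ^ 0) +
        ((∑' m : ℕ, ((p : ℂ) + k + 1) * (Dcoef (p + 1) k (m + 1) * z ^ (m + 1))) +
          ∑' m : ℕ, Dcoef (p + 1) (k + 1) m * z ^ (m + 1)) := by
        rw [Summable.tsum_add shift1 g2]
    _ = ((p : ℂ) + k + 1) * (Dcoef (p + 1) k 0 * z ^ 0 +
          ∑' m : ℕ, Dcoef (p + 1) k (m + 1) * z ^ (m + 1)) +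
          ∑' m : ℕ, z * (Dcoef (p + 1) (k + 1) m * z ^ m) := by
        rw [tsum_mul_left, hz]; ring
    _ = ((p : ℂ) + k + 1) * Dfun (p + 1) k z + z * Dfun (p + 1) (k + 1) z := by
        rw [Dfun, ← Summable.tsum_eq_zero_add s1, Dfun, tsum_mul_left]

lemma iteratedDeriv_Dfun (p : ℕ) (c : ℂ) :
    ∀ (k j : ℕ) (a : ℂ) (w : ℂ),
      iteratedDeriv k (fun z => a * Dfun p j (c * z)) w = a * c ^ k * Dfun p (j + k) (c * w) := by
  intro k
  induction k with
  | zero => intro j a w; simp [iteratedDeriv_zero]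
  | succ n ih =>
    intro j a w
    rw [iteratedDeriv_succ']
    have hder : (deriv fun z => a * Dfun p j (c * z)) =
        fun z => a * c * Dfun p (j + 1) (c * z) := by
      funext y
      have h1 : HasDerivAt (fun z : ℂ => Dfun p j (c * z)) (Dfun p (j + 1) (c * y) * c) y := by
        have := (hasDerivAt_Dfun p j (c * y)).comp y ((hasDerivAt_id y).const_mul c)
        simpa [mul_comm, Function.comp_def] using this
      have h2 := h1.const_mul a
      rw [h2.deriv]
      ring
    rw [hder, ih (j + 1) (a * c) w]
    rw [show j + 1 + n = j + (n + 1) by ring]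
    ring

lemma phiC_eq_Dfun (p : ℕ) : phiC p = Dfun p 0 := by
  funext z
  rw [phiC, Dfun]
  refine tsum_congr fun m => ?_
  rw [Dcoef]
  rw [show m + 0 = m from rfl]
  have f1 : ((m.factorial : ℂ)) ≠ 0 := Nat.cast_ne_zero.mpr m.factorial_ne_zero
  rw [div_mul_eq_div_div, div_self f1]
  ring

lemma ftc_scalar (p k : ℕ) (ν : ℂ) (t : ℝ) :
    (∫ s in (0:ℝ)..t, (s : ℂ) ^ (p + k) * Dfun p k ((s : ℂ) * ν)) =
      (t : ℂ) ^ (p + k + 1) * Dfun (p + 1) k ((t : ℂ) * ν) := by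
  set G : ℂ → ℂ := fun z => z ^ (p + k + 1) * Dfun (p + 1) k (z * ν) with hG
  have hG' : ∀ z : ℂ, HasDerivAt G (z ^ (p + k) * Dfun p k (z * ν)) z := by
    intro z
    have h1 : HasDerivAt (fun z : ℂ => z ^ (p + k + 1))
        (((p + k + 1 : ℕ) : ℂ) * z ^ (p + k)) z := by
      simpa using hasDerivAt_pow (p + k + 1) z
    have h2 : HasDerivAt (fun z : ℂ => Dfun (p + 1) k (z * ν))
        (Dfun (p + 1) (k + 1) (z * ν) * ν) z := by
      have := (hasDerivAt_Dfun (p + 1) k (z * ν)).comp z (hasDerivAt_mul_const ν)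
      simpa [Function.comp_def] using this
    have h3 := h1.mul h2
    refine HasDerivAt.congr_deriv h3 ?_
    rw [Dfun_rec p k (z * ν)]
    push_cast
    ring
  have hcont : Continuous fun s : ℝ => (s : ℂ) ^ (p + k) * Dfun p k ((s : ℂ) * ν) :=
    (Complex.continuous_ofReal.pow _).mul
      ((continuous_Dfun p k).comp (Complex.continuous_ofReal.mul continuous_const))
  have := intervalIntegral.integral_eq_sub_of_hasDerivAt
    (f := fun s : ℝ => G s) (f' := fun s : ℝ => (s : ℂ) ^ (p + k) * Dfun p k ((s : ℂ) * ν))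
    (fun x _ => (hG' x).comp_ofReal) (hcont.intervalIntegrable 0 t)
  rw [this, hG]
  simp

lemma simplex_isClosed (k : ℕ) : IsClosed (simplexSet k) := by
  have h : simplexSet k = (⋂ j : Fin k, {s : Fin k → ℝ | 0 ≤ s j} ∩ {s | s j ≤ 1}) ∩
      ⋂ (i : Fin k) (j : Fin k) (_ : i ≤ j), {s : Fin k → ℝ | s j ≤ s i} := by
    ext s
    simp only [simplexSet, Set.mem_setOf_eq, Set.mem_inter_iff, Set.mem_iInter,
      Set.mem_setOf_eq]
  rw [h]
  refine IsClosed.inter (isClosed_iInter fun j =>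
    (isClosed_le continuous_const (continuous_apply j)).inter
      (isClosed_le (continuous_apply j) continuous_const))
    (isClosed_iInter fun i => isClosed_iInter fun j => isClosed_iInter fun _ =>
      isClosed_le (continuous_apply j) (continuous_apply i))

lemma simplex_isCompact (k : ℕ) : IsCompact (simplexSet k) := by
  refine IsCompact.of_isClosed_subset
    (isCompact_univ_pi fun _ : Fin k => isCompact_Icc (a := (0:ℝ)) (b := 1))
    (simplex_isClosed k) ?_
  intro s hs
  exact Set.mem_univ_pi.mpr fun j => ⟨(hs.1 j).1, (hs.1 j).2⟩

/-- `∫_0^t s^p (φ_p)_s[λ_1,…,λ_{k+1}] ds = t^{p+1} (φ_{p+1})_t[λ_1,…,λ_{k+1}]`. -/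
theorem statement7 (k p : ℕ) (lam : Fin (k + 1) → ℂ) (t : ℝ) (ht : 0 ≤ t) :
    (∫ s in (0:ℝ)..t, (s : ℂ) ^ p * divDiff (fun z => phiC p ((s : ℂ) * z)) lam) =
      (t : ℂ) ^ (p + 1) * divDiff (fun z => phiC (p + 1) ((t : ℂ) * z)) lam := by
  set node : (Fin k → ℝ) → ℂ :=
    fun σ => lam 0 + ∑ j : Fin k, (σ j : ℂ) * (lam j.succ - lam j.castSucc) with hnode
  have hnodeC : Continuous node := by
    apply continuous_const.add
    exact continuous_finset_sum _ fun j _ =>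
      (Complex.continuous_ofReal.comp (continuous_apply j)).mul continuous_const
  have hid : ∀ (q : ℕ) (c : ℂ) (w : ℂ),
      iteratedDeriv k (fun z => phiC q (c * z)) w = c ^ k * Dfun q k (c * w) := by
    intro q c w
    have h1 : (fun z => phiC q (c * z)) = fun z => (1 : ℂ) * Dfun q 0 (c * z) := by
      funext z; rw [phiC_eq_Dfun]; ring
    rw [h1, iteratedDeriv_Dfun q c k 0 1 w]
    simp
  have hΔmeas : MeasurableSet (simplexSet k) := (simplex_isClosed k).measurableSet
  have hdd : ∀ (q : ℕ) (c : ℂ),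
      divDiff (fun z => phiC q (c * z)) lam =
        ∫ σ in simplexSet k, c ^ k * Dfun q k (c * node σ) := by
    intro q c
    rw [divDiff]
    exact setIntegral_congr_fun hΔmeas fun σ _ => hid q c (node σ)
  -- the common kernel
  have key : ∀ s : ℝ, (s : ℂ) ^ p * divDiff (fun z => phiC p ((s : ℂ) * z)) lam =
      ∫ σ in simplexSet k, (s : ℂ) ^ (p + k) * Dfun p k ((s : ℂ) * node σ) := by
    intro s
    rw [hdd p (s : ℂ), ← smul_eq_mul, ← integral_smul]
    refine setIntegral_congr_fun hΔmeas fun σ _ => ?_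
    rw [smul_eq_mul, pow_add]
    ring
  have keyR : (t : ℂ) ^ (p + 1) * divDiff (fun z => phiC (p + 1) ((t : ℂ) * z)) lam =
      ∫ σ in simplexSet k, (t : ℂ) ^ (p + k + 1) * Dfun (p + 1) k ((t : ℂ) * node σ) := by
    rw [hdd (p + 1) (t : ℂ), ← smul_eq_mul, ← integral_smul]
    refine setIntegral_congr_fun hΔmeas fun σ _ => ?_
    rw [smul_eq_mul, show p + k + 1 = (p + 1) + k by ring, pow_add]
    ring
  rw [keyR]
  calc (∫ s in (0:ℝ)..t, (s : ℂ) ^ p * divDiff (fun z => phiC p ((s : ℂ) * z)) lam)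
      = ∫ s in (0:ℝ)..t, ∫ σ in simplexSet k,
          (s : ℂ) ^ (p + k) * Dfun p k ((s : ℂ) * node σ) := by
        exact intervalIntegral.integral_congr fun s _ => key s
    _ = ∫ s in Set.Ioc (0:ℝ) t, ∫ σ in simplexSet k,
          (s : ℂ) ^ (p + k) * Dfun p k ((s : ℂ) * node σ) := by
        rw [intervalIntegral.integral_of_le ht]
    _ = ∫ σ in simplexSet k, ∫ s in Set.Ioc (0:ℝ) t,
          (s : ℂ) ^ (p + k) * Dfun p k ((s : ℂ) * node σ) := by
        apply MeasureTheory.integral_integral_swap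
        have hFcont : Continuous (Function.uncurry fun (s : ℝ) (σ : Fin k → ℝ) =>
            (s : ℂ) ^ (p + k) * Dfun p k ((s : ℂ) * node σ)) := by
          apply Continuous.mul
          · exact (Complex.continuous_ofReal.comp continuous_fst).pow _
          · exact (continuous_Dfun p k).comp
              ((Complex.continuous_ofReal.comp continuous_fst).mul
                (hnodeC.comp continuous_snd))
        rw [Measure.prod_restrict]
        refine MeasureTheory.IntegrableOn.mono_set ?_
          (Set.prod_mono Set.Ioc_subset_Icc_self subset_rfl)
        exact hFcont.continuousOn.integrableOn_compact
          (isCompact_Icc.prod (simplex_isCompact k))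
    _ = ∫ σ in simplexSet k, (t : ℂ) ^ (p + k + 1) * Dfun (p + 1) k ((t : ℂ) * node σ) := by
        refine setIntegral_congr_fun hΔmeas fun σ _ => ?_
        rw [← intervalIntegral.integral_of_le ht]
        exact ftc_scalar p k (node σ) t
end

section
/- Let M ∈ ℂ^{m×m}, p ∈ ℕ with p ≥ 1, and t ≥ 0. Then the spectral operator norm of φ_p(tM) satisfies ‖φ_p(tM)‖₂ ≤ (max_{s∈[0,t]} ‖e^{sM}‖₂)/p!. -/
set_option maxHeartbeats 1000000
set_option synthInstance.maxHeartbeats 400000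

open MeasureTheory

set_option maxHeartbeats 1000000
set_option synthInstance.maxHeartbeats 400000

section S16Aux

open NormedSpace

namespace S16Aux

variable {d : ℕ}

/-- `Matrix.toEuclideanCLM` as a linear equivalence. -/
noncomputable def eE (d : ℕ) :
    Matrix (Fin d) (Fin d) ℂ ≃ₗ[ℂ]
      (EuclideanSpace ℂ (Fin d) →L[ℂ] EuclideanSpace ℂ (Fin d)) where
  toFun A := Matrix.toEuclideanCLM (𝕜 := ℂ) A
  invFun T := (Matrix.toEuclideanCLM (𝕜 := ℂ) (n := Fin d)).symm T
  left_inv A := StarAlgEquiv.symm_apply_apply _ A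
  right_inv T := StarAlgEquiv.apply_symm_apply _ T
  map_add' A B := map_add _ A B
  map_smul' c A := map_smul _ c A

local notation "B" => (EuclideanSpace ℂ (Fin d) →L[ℂ] EuclideanSpace ℂ (Fin d))

lemma vnorm_eq (x : Fin d → ℂ) :
    vnorm x = ‖(WithLp.equiv 2 (Fin d → ℂ)).symm x‖ := by
  simp [vnorm, EuclideanSpace.norm_eq]

lemma mnorm_eq (A : Matrix (Fin d) (Fin d) ℂ) :
    mnorm A = ‖Matrix.toEuclideanCLM (𝕜 := ℂ) A‖ := by
  rw [← ContinuousLinearMap.sSup_unitClosedBall_eq_norm]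
  unfold mnorm
  congr 1
  ext c
  constructor
  · rintro ⟨x, hx, rfl⟩
    refine ⟨(WithLp.equiv 2 (Fin d → ℂ)).symm x, ?_, ?_⟩
    · rw [mem_closedBall_zero_iff, ← vnorm_eq]; exact hx
    · show ‖(Matrix.toEuclideanCLM (𝕜 := ℂ) A) ((WithLp.equiv 2 (Fin d → ℂ)).symm x)‖ = _
      rw [vnorm_eq]; rfl
  · rintro ⟨y, hy, rfl⟩
    refine ⟨WithLp.equiv 2 (Fin d → ℂ) y, ?_, ?_⟩
    · rw [vnorm_eq, Equiv.symm_apply_apply]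
      exact mem_closedBall_zero_iff.mp hy
    · show ‖(Matrix.toEuclideanCLM (𝕜 := ℂ) A) y‖ =
        vnorm (A.mulVec (WithLp.equiv 2 (Fin d → ℂ) y))
      rw [vnorm_eq]; rfl

lemma norm_pow_le'' (T : B) (k : ℕ) : ‖T ^ k‖ ≤ ‖T‖ ^ k := by
  cases k with
  | zero =>
      rw [pow_zero, pow_zero, ContinuousLinearMap.one_def]
      exact ContinuousLinearMap.norm_id_le
  | succ n => exact norm_pow_le' T n.succ_pos

lemma summable_phi (p : ℕ) (T : B) :
    Summable (fun k : ℕ => ((k + p).factorial : ℂ)⁻¹ • T ^ k) := by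
  apply Summable.of_norm_bounded (g := fun k => ‖T‖ ^ k / k.factorial)
    (Real.summable_pow_div_factorial ‖T‖)
  intro k
  rw [norm_smul ((((k + p).factorial : ℂ))⁻¹) (T ^ k), norm_inv, Complex.norm_natCast,
    div_eq_inv_mul]
  have h1 : (((k + p).factorial : ℝ))⁻¹ ≤ ((k.factorial : ℝ))⁻¹ := by
    apply inv_anti₀ (by positivity)
    exact_mod_cast Nat.factorial_le (Nat.le_add_right k p)
  exact mul_le_mul h1 (norm_pow_le'' T k) (norm_nonneg _) (by positivity)

lemma matPhi_eq (p : ℕ) (A : Matrix (Fin d) (Fin d) ℂ) :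
    Matrix.toEuclideanCLM (𝕜 := ℂ) (matPhi p A) =
      ∑' k : ℕ, ((k + p).factorial : ℂ)⁻¹ • (Matrix.toEuclideanCLM (𝕜 := ℂ) A) ^ k := by
  set e := (eE d).toContinuousLinearEquiv with he
  set T := Matrix.toEuclideanCLM (𝕜 := ℂ) A with hT
  have hs := summable_phi p T
  have hsym : ∀ k : ℕ,
      (Matrix.toEuclideanCLM (𝕜 := ℂ) (n := Fin d)).symm (((k + p).factorial : ℂ)⁻¹ • T ^ k) =
        ((k + p).factorial : ℂ)⁻¹ • A ^ k := by
    intro k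
    rw [_root_.map_smul, map_pow, hT, StarAlgEquiv.symm_apply_apply]
  have hsum : Summable (fun k : ℕ => ((k + p).factorial : ℂ)⁻¹ • A ^ k) := by
    have h2 := hs.map (e.symm : B →L[ℂ] Matrix (Fin d) (Fin d) ℂ)
      (e.symm : B →L[ℂ] Matrix (Fin d) (Fin d) ℂ).continuous
    exact h2.congr fun k => hsym k
  calc Matrix.toEuclideanCLM (𝕜 := ℂ) (matPhi p A)
      = (e : Matrix (Fin d) (Fin d) ℂ →L[ℂ] B) (∑' k : ℕ, ((k + p).factorial : ℂ)⁻¹ • A ^ k) :=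
        rfl
    _ = ∑' k : ℕ, (e : Matrix (Fin d) (Fin d) ℂ →L[ℂ] B) (((k + p).factorial : ℂ)⁻¹ • A ^ k) :=
        ContinuousLinearMap.map_tsum _ hsum
    _ = ∑' k : ℕ, ((k + p).factorial : ℂ)⁻¹ • T ^ k := by
        refine tsum_congr fun k => ?_
        show Matrix.toEuclideanCLM (𝕜 := ℂ) (((k + p).factorial : ℂ)⁻¹ • A ^ k) = _
        rw [_root_.map_smul, map_pow]

lemma beta_nat (k : ℕ) {p : ℕ} (hp : 1 ≤ p) :
    ∫ x in (0:ℝ)..1, x ^ k * (1 - x) ^ (p - 1) =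
      (k.factorial : ℝ) * ((p - 1).factorial : ℝ) / ((k + p).factorial : ℝ) := by
  have h1 : (0:ℝ) < (((k:ℂ)+1)).re := by simp; positivity
  have h2 : (0:ℝ) < ((p:ℂ)).re := by
    simp
    exact_mod_cast Nat.lt_of_lt_of_le Nat.zero_lt_one hp
  have hB := Complex.Gamma_mul_Gamma_eq_betaIntegral h1 h2
  have hG1 : Complex.Gamma ((k:ℂ)+1) = (k.factorial : ℂ) := Complex.Gamma_nat_eq_factorial k
  have hG2 : Complex.Gamma ((p:ℂ)) = ((p-1).factorial : ℂ) := by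
    have : (p:ℂ) = ((p-1 : ℕ) : ℂ) + 1 := by
      push_cast [Nat.cast_sub hp]; ring
    rw [this, Complex.Gamma_nat_eq_factorial]
  have hG3 : Complex.Gamma ((k:ℂ)+1+(p:ℂ)) = ((k+p).factorial : ℂ) := by
    have : (k:ℂ)+1+(p:ℂ) = ((k+p : ℕ) : ℂ) + 1 := by push_cast; ring
    rw [this, Complex.Gamma_nat_eq_factorial]
  have hreal : Complex.betaIntegral ((k:ℂ)+1) (p:ℂ) =
      ((∫ x in (0:ℝ)..1, x ^ k * (1 - x) ^ (p - 1) : ℝ) : ℂ) := by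
    rw [Complex.betaIntegral, ← intervalIntegral.integral_ofReal]
    apply intervalIntegral.integral_congr
    intro x hx
    have e1 : ((k:ℂ)+1) - 1 = ((k:ℕ) : ℂ) := by ring
    have e2 : ((p:ℂ)) - 1 = ((p - 1 : ℕ) : ℂ) := by
      push_cast [Nat.cast_sub hp]; ring
    beta_reduce
    rw [e1, e2, Complex.cpow_natCast, Complex.cpow_natCast]
    push_cast
    ring
  have hne : Complex.Gamma ((k:ℂ)+1+(p:ℂ)) ≠ 0 := by
    rw [hG3]; exact_mod_cast Nat.cast_ne_zero.mpr (Nat.factorial_ne_zero _)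
  rw [hG1, hG2, hG3, hreal] at hB
  have hne2 : ((k + p).factorial : ℂ) ≠ 0 :=
    Nat.cast_ne_zero.mpr (Nat.factorial_ne_zero _)
  have hfinal : ((∫ x in (0:ℝ)..1, x ^ k * (1 - x) ^ (p - 1) : ℝ) : ℂ) =
      (k.factorial : ℂ) * ((p - 1).factorial : ℂ) / ((k + p).factorial : ℂ) := by
    rw [eq_div_iff hne2]
    linear_combination -hB
  have h5 : ((∫ x in (0:ℝ)..1, x ^ k * (1 - x) ^ (p - 1) : ℝ) : ℂ) =
      (((k.factorial : ℝ) * ((p - 1).factorial : ℝ) / ((k + p).factorial : ℝ) : ℝ) : ℂ) := by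
    rw [hfinal]; push_cast; ring
  exact Complex.ofReal_inj.mp h5

lemma creal (r : ℝ) (X : B) : ((r : ℂ)) • X = r • X := by
  exact algebraMap_smul ℂ r X

lemma phi_integral (p : ℕ) (hp : 1 ≤ p) (T : B) :
    (∑' k : ℕ, ((k + p).factorial : ℂ)⁻¹ • T ^ k) =
      ∫ θ in Set.Ioc (0:ℝ) 1, ((1 - θ) ^ (p - 1) / ((p - 1).factorial : ℝ)) • exp (θ • T) := by
  set F : ℕ → ℝ → B := fun k θ =>
    (((1 - θ) ^ (p - 1) * θ ^ k) / (((p - 1).factorial : ℝ) * (k.factorial : ℝ))) • T ^ k with hF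
  have hpt : ∀ θ : ℝ, ((1 - θ) ^ (p - 1) / ((p - 1).factorial : ℝ)) • exp (θ • T)
      = ∑' k : ℕ, F k θ := by
    intro θ
    have h := (exp_series_hasSum_exp' (𝕂 := ℂ) (θ • T)).const_smul
      ((1 - θ) ^ (p - 1) / ((p - 1).factorial : ℝ))
    have h2 : (fun k : ℕ => ((1 - θ) ^ (p - 1) / ((p - 1).factorial : ℝ)) •
        (((k.factorial : ℂ))⁻¹ • (θ • T) ^ k)) = fun k => F k θ := by
      funext k
      rw [← creal θ T, smul_pow, ← Complex.ofReal_pow, creal]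
      rw [show ((k.factorial : ℂ))⁻¹ = ((((k.factorial : ℝ))⁻¹ : ℝ) : ℂ) by push_cast; ring,
        creal, smul_smul, smul_smul]
      congr 1
      have hk : (k.factorial : ℝ) ≠ 0 := Nat.cast_ne_zero.mpr (Nat.factorial_ne_zero _)
      have hq : ((p - 1).factorial : ℝ) ≠ 0 := Nat.cast_ne_zero.mpr (Nat.factorial_ne_zero _)
      field_simp
    rw [h2] at h
    exact h.tsum_eq.symm
  have hcont : ∀ k, Continuous (F k) := by
    intro k
    rw [hF]
    fun_prop
  have hint : ∀ k : ℕ, Integrable (F k) (volume.restrict (Set.Ioc (0:ℝ) 1)) := fun k =>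
    (hcont k).integrableOn_Ioc
  have hnormint : Summable (fun k : ℕ => ∫ θ in Set.Ioc (0:ℝ) 1, ‖F k θ‖) := by
    refine Summable.of_nonneg_of_le (fun k => integral_nonneg fun θ => norm_nonneg _)
      (fun k => ?_) (Real.summable_pow_div_factorial ‖T‖)
    have hb : ∀ θ ∈ Set.Ioc (0:ℝ) 1, ‖F k θ‖ ≤ ‖T‖ ^ k / k.factorial := by
      intro θ hθ
      obtain ⟨h0, h1⟩ := hθ
      have hθ1 : (0:ℝ) ≤ 1 - θ := by linarith
      have hc0 : (0:ℝ) ≤ (1 - θ) ^ (p - 1) * θ ^ k / (((p - 1).factorial : ℝ) * (k.factorial : ℝ)) := by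
        positivity
      show ‖((1 - θ) ^ (p - 1) * θ ^ k / (((p - 1).factorial : ℝ) * (k.factorial : ℝ))) • T ^ k‖ ≤ _
      rw [norm_smul ((1 - θ) ^ (p - 1) * θ ^ k / (((p - 1).factorial : ℝ) * (k.factorial : ℝ)))
        (T ^ k), Real.norm_eq_abs, abs_of_nonneg hc0]
      have h1a : (1 - θ) ^ (p - 1) ≤ 1 := pow_le_one₀ hθ1 (by linarith)
      have h1b : θ ^ k ≤ 1 := pow_le_one₀ h0.le h1
      have hP : (1:ℝ) ≤ ((p - 1).factorial : ℝ) := by exact_mod_cast (p - 1).factorial_pos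
      have hK : (0:ℝ) < (k.factorial : ℝ) := by exact_mod_cast k.factorial_pos
      have hcoef : (1 - θ) ^ (p - 1) * θ ^ k / (((p - 1).factorial : ℝ) * (k.factorial : ℝ))
          ≤ 1 / (k.factorial : ℝ) := by
        rw [div_le_div_iff₀ (by positivity) hK]
        have hab : (1 - θ) ^ (p - 1) * θ ^ k ≤ 1 :=
          mul_le_one₀ h1a (pow_nonneg h0.le k) h1b
        have hab0 : 0 ≤ (1 - θ) ^ (p - 1) * θ ^ k :=
          mul_nonneg (pow_nonneg hθ1 _) (pow_nonneg h0.le _)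
        nlinarith
      calc (1 - θ) ^ (p - 1) * θ ^ k / (((p - 1).factorial : ℝ) * (k.factorial : ℝ)) * ‖T ^ k‖
          ≤ (1 / (k.factorial : ℝ)) * ‖T‖ ^ k :=
            mul_le_mul hcoef (norm_pow_le'' T k) (norm_nonneg _) (by positivity)
        _ = ‖T‖ ^ k / (k.factorial : ℝ) := by ring
    have h2 := setIntegral_mono_on ((hcont k).norm.integrableOn_Ioc)
      (integrableOn_const (by rw [Real.volume_Ioc]; norm_num)) measurableSet_Ioc hb
    rwa [setIntegral_const, Real.volume_real_Ioc_of_le zero_le_one, show (1:ℝ) - 0 = 1 by norm_num,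
      one_smul] at h2
  have key := integral_tsum_of_summable_integral_norm hint hnormint
  have hterm : ∀ k : ℕ, (∫ θ in Set.Ioc (0:ℝ) 1, F k θ) = ((k + p).factorial : ℂ)⁻¹ • T ^ k := by
    intro k
    rw [hF]
    rw [integral_smul_const]
    have hco : (∫ θ in Set.Ioc (0:ℝ) 1,
        ((1 - θ) ^ (p - 1) * θ ^ k) / (((p - 1).factorial : ℝ) * (k.factorial : ℝ))) =
        (((k + p).factorial : ℝ))⁻¹ := by
      rw [← intervalIntegral.integral_of_le (by norm_num : (0:ℝ) ≤ 1)]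
      have heq : ∀ θ : ℝ, ((1 - θ) ^ (p - 1) * θ ^ k) / (((p - 1).factorial : ℝ) * (k.factorial : ℝ))
          = (θ ^ k * (1 - θ) ^ (p - 1)) * ((((p - 1).factorial : ℝ) * (k.factorial : ℝ)))⁻¹ := by
        intro θ; ring
      rw [intervalIntegral.integral_congr (fun θ _ => heq θ),
        intervalIntegral.integral_mul_const, beta_nat k hp]
      have hk : (k.factorial : ℝ) ≠ 0 := Nat.cast_ne_zero.mpr (Nat.factorial_ne_zero _)
      have hq : ((p - 1).factorial : ℝ) ≠ 0 := Nat.cast_ne_zero.mpr (Nat.factorial_ne_zero _)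
      have hkp : ((k + p).factorial : ℝ) ≠ 0 := Nat.cast_ne_zero.mpr (Nat.factorial_ne_zero _)
      field_simp
    rw [hco, ← creal]
    congr 1
    push_cast
    ring
  calc (∑' k : ℕ, ((k + p).factorial : ℂ)⁻¹ • T ^ k)
      = ∑' k : ℕ, ∫ θ in Set.Ioc (0:ℝ) 1, F k θ := (tsum_congr hterm).symm
    _ = ∫ θ in Set.Ioc (0:ℝ) 1, ∑' k : ℕ, F k θ := key
    _ = ∫ θ in Set.Ioc (0:ℝ) 1, ((1 - θ) ^ (p - 1) / ((p - 1).factorial : ℝ)) • exp (θ • T) :=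
        integral_congr_ae (Filter.Eventually.of_forall fun θ => (hpt θ).symm)

end S16Aux

end S16Aux

/-- for `p ≥ 1` and `t ≥ 0`,
`‖φ_p(tM)‖₂ ≤ (max_{s∈[0,t]} ‖e^{sM}‖₂)/p!`. -/
theorem statement16 (d : ℕ) (M : Matrix (Fin d) (Fin d) ℂ) (p : ℕ) (hp : 1 ≤ p)
    (t : ℝ) (ht : 0 ≤ t) :
    mnorm (matPhi p (t • M)) ≤
      sSup ((fun s : ℝ => mnorm (matPhi 0 (s • M))) '' Set.Icc 0 t) /
        (p.factorial : ℝ) := by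
  classical
  open S16Aux NormedSpace in
  set T := Matrix.toEuclideanCLM (𝕜 := ℂ) (t • M) with hT
  have cmat : ∀ (r : ℝ) (X : Matrix (Fin d) (Fin d) ℂ), ((r : ℂ)) • X = r • X := fun r X =>
    algebraMap_smul ℂ r X
  have hfun : ∀ s : ℝ, mnorm (matPhi 0 (s • M)) =
      ‖NormedSpace.exp (Matrix.toEuclideanCLM (𝕜 := ℂ) (s • M))‖ := by
    intro s
    rw [mnorm_eq, matPhi_eq, NormedSpace.exp_eq_tsum ℂ]
    simp
  have hC_bdd : BddAbove ((fun s : ℝ => mnorm (matPhi 0 (s • M))) '' Set.Icc 0 t) := by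
    apply IsCompact.bddAbove_image isCompact_Icc
    have hcont : Continuous fun s : ℝ => mnorm (matPhi 0 (s • M)) := by
      simp only [hfun]
      apply Continuous.norm
      apply (continuous_iff_continuousAt.2 fun x => (NormedSpace.exp_analytic (𝕂 := ℂ) x).continuousAt).comp
      exact ((eE d).toContinuousLinearEquiv.continuous).comp
        ((continuous_id.smul continuous_const : Continuous fun s : ℝ => s • M))
    exact hcont.continuousOn
  set C := sSup ((fun s : ℝ => mnorm (matPhi 0 (s • M))) '' Set.Icc 0 t) with hC
  have hCle : ∀ θ ∈ Set.Ioc (0:ℝ) 1, ‖NormedSpace.exp (θ • T)‖ ≤ C := by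
    intro θ hθ
    have e1 : θ • T = Matrix.toEuclideanCLM (𝕜 := ℂ) ((θ * t) • M) := by
      rw [hT, ← creal θ, ← _root_.map_smul, cmat θ (t • M), smul_smul]
    rw [e1, ← hfun (θ * t)]
    apply le_csSup hC_bdd
    refine ⟨θ * t, ⟨mul_nonneg hθ.1.le ht, ?_⟩, rfl⟩
    nlinarith [hθ.2]
  have h0 : mnorm (matPhi p (t • M)) =
      ‖∑' k : ℕ, ((k + p).factorial : ℂ)⁻¹ • T ^ k‖ := by
    rw [mnorm_eq, matPhi_eq]
  rw [h0, phi_integral p hp T]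
  have hcontg : Continuous fun θ : ℝ =>
      ((1 - θ) ^ (p - 1) / ((p - 1).factorial : ℝ)) • NormedSpace.exp (θ • T) := by
    refine Continuous.smul (f := fun θ : ℝ => ((1 - θ) ^ (p - 1) / ((p - 1).factorial : ℝ)))
      (g := fun θ : ℝ => NormedSpace.exp (θ • T)) ?_ ?_
    · fun_prop
    · exact (continuous_iff_continuousAt.2 fun x => (NormedSpace.exp_analytic (𝕂 := ℂ) x).continuousAt).comp (continuous_id.smul continuous_const)
  calc ‖∫ θ in Set.Ioc (0:ℝ) 1,
        ((1 - θ) ^ (p - 1) / ((p - 1).factorial : ℝ)) • NormedSpace.exp (θ • T)‖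
      ≤ ∫ θ in Set.Ioc (0:ℝ) 1,
          ‖((1 - θ) ^ (p - 1) / ((p - 1).factorial : ℝ)) • NormedSpace.exp (θ • T)‖ :=
        norm_integral_le_integral_norm _
    _ ≤ ∫ θ in Set.Ioc (0:ℝ) 1, ((1 - θ) ^ (p - 1) / ((p - 1).factorial : ℝ)) * C := by
        refine setIntegral_mono_on (hcontg.norm.integrableOn_Ioc) ?_ measurableSet_Ioc ?_
        · exact (((continuous_const.sub continuous_id).pow _).div_const _).mul
            continuous_const |>.integrableOn_Ioc
        · intro θ hθ
          have hθ1 : (0:ℝ) ≤ 1 - θ := by linarith [hθ.2]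
          have hc0 : (0:ℝ) ≤ (1 - θ) ^ (p - 1) / ((p - 1).factorial : ℝ) := by positivity
          rw [norm_smul ((1 - θ) ^ (p - 1) / ((p - 1).factorial : ℝ))
            (NormedSpace.exp (θ • T)), Real.norm_eq_abs, abs_of_nonneg hc0]
          exact mul_le_mul_of_nonneg_left (hCle θ hθ) hc0
    _ = C / (p.factorial : ℝ) := by
        rw [← intervalIntegral.integral_of_le zero_le_one,
          intervalIntegral.integral_mul_const, intervalIntegral.integral_div]
        have hone : (∫ θ in (0:ℝ)..1, (1 - θ) ^ (p - 1)) = 1 / (p : ℝ) := by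
          have hcs := intervalIntegral.integral_comp_sub_left (a := (0:ℝ)) (b := 1)
            (fun y : ℝ => y ^ (p - 1)) 1
          simp only [sub_self, sub_zero] at hcs
          rw [hcs, integral_pow, Nat.sub_add_cancel hp, one_pow,
            zero_pow (by omega : p ≠ 0), sub_zero,
            show ((p - 1 : ℕ) : ℝ) + 1 = (p : ℝ) by push_cast [Nat.cast_sub hp]; ring]
        rw [hone]
        have hpf : (p.factorial : ℝ) = (p : ℝ) * ((p - 1).factorial : ℝ) := by
          exact_mod_cast (Nat.mul_factorial_pred (by omega)).symm
        have hppos : (0:ℝ) < (p : ℝ) := by exact_mod_cast Nat.lt_of_lt_of_le Nat.zero_lt_one hp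
        have hq : ((p - 1).factorial : ℝ) ≠ 0 := Nat.cast_ne_zero.mpr (Nat.factorial_ne_zero _)
        rw [hpf]
        field_simp
end
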